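/- arXiv:1104.2858 — 12 statements merged into one kernel-verified Lean document; each statement's English description precedes it below -/
import Mathlib

section
/- For every integer i > 1, the polynomial ψ_i(x,y) = ((x+y)^{p^{i-1}} - (x^p+y^p)^{p^{i-2}})/p^{i-1} has integer coefficients, where p is a prime. -/
open MvPolynomial

/-- For every integer `i > 1`, the polynomial
`ψ_i(x,y) = ((x+y)^{p^{i-1}} - (x^p+y^p)^{p^{i-2}})/p^{i-1}` has integer coefficients. -/
theorem psi_integral (p : ℕ) (hp : p.Prime) (i : ℕ) (hi : 1 < i) :
    ∃ q : MvPolynomial (Fin 2) ℤ,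
      MvPolynomial.map (Int.castRingHom ℚ) q =
        C (((p : ℚ) ^ (i - 1))⁻¹) *
          ((X 0 + X 1) ^ p ^ (i - 1) - (X 0 ^ p + X 1 ^ p) ^ p ^ (i - 2)) := by
  haveI := Fact.mk hp
  set R := MvPolynomial (Fin 2) ℤ
  have h1 : (p : R) ∣ (X 0 + X 1) ^ p - (X 0 ^ p + X 1 ^ p) := by
    rw [← C_eq_coe_nat, C_dvd_iff_zmod, RingHom.map_sub, sub_eq_zero]
    simp [add_pow_char]
  have h2 : ((p : R) ^ (i - 2 + 1)) ∣
      ((X 0 + X 1) ^ p) ^ p ^ (i - 2) - (X 0 ^ p + X 1 ^ p) ^ p ^ (i - 2) := by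
    have := dvd_sub_pow_of_dvd_sub h1 (i - 2)
    simpa using this
  have hie : i - 2 + 1 = i - 1 := by omega
  rw [hie, ← pow_mul, show p * p ^ (i - 2) = p ^ (i - 1) by
    rw [← pow_succ', hie]] at h2
  obtain ⟨q, hq⟩ := h2
  refine ⟨q, ?_⟩
  have hmap := congrArg (MvPolynomial.map (Int.castRingHom ℚ)) hq
  simp only [map_sub, map_add, map_pow, map_mul, MvPolynomial.map_X,
    Nat.cast_pow, map_natCast] at hmap
  rw [hmap]
  rw [← mul_assoc, ← C_eq_coe_nat, ← C_pow, ← C_mul]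
  have hp0 : ((p : ℚ) ^ (i - 1)) ≠ 0 := by
    have := hp.pos
    positivity
  rw [inv_mul_cancel₀ hp0, C_1, one_mul]
end

section
/- For every i > 1, the integral polynomials ψ_i satisfy the recursive formula ψ_{i+1}(x,y) = Σ_{j=1}^{p} C(p,j) · p^{j(i-1)-i} · ψ_i(x,y)^j · (x^p+y^p)^{(p-j)p^{i-2}}. -/
open MvPolynomial

/-- The Witt addition auxiliary polynomials `ψ_i`, defined over `ℚ`:
`ψ_1(x,y) = x + y` and, for `i ≥ 2`,
`ψ_i(x,y) = ((x+y)^{p^{i-1}} - (x^p+y^p)^{p^{i-2}})/p^{i-1}`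
(these have integer coefficients). -/
noncomputable def psiQ (p : ℕ) : ℕ → MvPolynomial (Fin 2) ℚ
  | 0 => 0
  | 1 => X 0 + X 1
  | (i + 2) =>
      C (((p : ℚ) ^ (i + 1))⁻¹) *
        ((X 0 + X 1) ^ p ^ (i + 1) - (X 0 ^ p + X 1 ^ p) ^ p ^ i)

/-- for every `i > 1`,
`ψ_{i+1}(x,y) = Σ_{j=1}^{p} C(p,j) · p^{j(i-1)-i} · ψ_i(x,y)^j · (x^p+y^p)^{(p-j)p^{i-2}}`. -/
theorem psi_recursive (p : ℕ) (hp : p.Prime) (i : ℕ) (hi : 1 < i) :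
    psiQ p (i + 1) =
      ∑ j ∈ Finset.Icc 1 p,
        (p.choose j : MvPolynomial (Fin 2) ℚ) *
          C ((p : ℚ) ^ ((j : ℤ) * ((i : ℤ) - 1) - (i : ℤ))) *
          (psiQ p i) ^ j * (X 0 ^ p + X 1 ^ p) ^ ((p - j) * p ^ (i - 2)) := by
  obtain ⟨k, rfl⟩ : ∃ k, i = k + 2 := ⟨i - 2, by omega⟩
  have hp0 : (p : ℚ) ≠ 0 := Nat.cast_ne_zero.mpr hp.pos.ne'
  set A : MvPolynomial (Fin 2) ℚ := X 0 + X 1 with hA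
  set B : MvPolynomial (Fin 2) ℚ := X 0 ^ p + X 1 ^ p with hB
  have hLeft : psiQ p (k + 2 + 1) =
      C (((p : ℚ) ^ (k + 2))⁻¹) * (A ^ p ^ (k + 2) - B ^ p ^ (k + 1)) := rfl
  have hMid : psiQ p (k + 2) =
      C (((p : ℚ) ^ (k + 1))⁻¹) * (A ^ p ^ (k + 1) - B ^ p ^ k) := rfl
  set D : MvPolynomial (Fin 2) ℚ := A ^ p ^ (k + 1) - B ^ p ^ k with hD
  have hconst : ∀ j : ℕ,
      (p : ℚ) ^ ((j : ℤ) * (((k + 2 : ℕ) : ℤ) - 1) - ((k + 2 : ℕ) : ℤ)) *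
        (((p : ℚ) ^ (k + 1))⁻¹) ^ j = ((p : ℚ) ^ (k + 2))⁻¹ := by
    intro j
    rw [inv_pow, ← pow_mul, ← zpow_natCast (p : ℚ) ((k + 1) * j), ← zpow_neg,
      ← zpow_add₀ hp0, ← zpow_natCast (p : ℚ) (k + 2), ← zpow_neg]
    congr 1
    push_cast
    ring
  have hkey : ∑ j ∈ Finset.Icc 1 p,
      (p.choose j : MvPolynomial (Fin 2) ℚ) * D ^ j * B ^ ((p - j) * p ^ k) =
      A ^ p ^ (k + 2) - B ^ p ^ (k + 1) := by
    have hbin := add_pow D (B ^ p ^ k) p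
    have hDB : D + B ^ p ^ k = A ^ p ^ (k + 1) := by rw [hD]; ring
    have hset : Finset.range (p + 1) = insert 0 (Finset.Icc 1 p) := by
      ext x; simp; omega
    rw [hDB, ← pow_mul, show p ^ (k + 1) * p = p ^ (k + 2) from (pow_succ p (k + 1)).symm,
      hset, Finset.sum_insert (by simp)] at hbin
    simp only [pow_zero, one_mul, Nat.sub_zero, Nat.choose_zero_right, Nat.cast_one,
      mul_one] at hbin
    rw [← pow_mul, show p ^ k * p = p ^ (k + 1) from (pow_succ p k).symm] at hbin
    have : ∑ j ∈ Finset.Icc 1 p, D ^ j * (B ^ p ^ k) ^ (p - j) * (p.choose j : MvPolynomial (Fin 2) ℚ) =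
        A ^ p ^ (k + 2) - B ^ p ^ (k + 1) := by
      rw [eq_sub_iff_add_eq, add_comm, ← hbin]
    rw [← this]
    refine Finset.sum_congr rfl fun j hj => ?_
    rw [← pow_mul, mul_comm (p ^ k) (p - j)]
    ring
  rw [hLeft, hMid, ← hkey, Finset.mul_sum]
  refine Finset.sum_congr rfl fun j hj => ?_
  have hc : C ((p : ℚ) ^ ((j : ℤ) * (((k + 2 : ℕ) : ℤ)- 1) - ((k + 2 : ℕ) : ℤ))) *
      C ((((p : ℚ) ^ (k + 1))⁻¹) ^ j) = (C (((p : ℚ) ^ (k + 2))⁻¹) : MvPolynomial (Fin 2) ℚ) := by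
    rw [← map_mul, hconst j]
  simp only [Nat.add_sub_cancel]
  rw [mul_pow, ← map_pow]

  linear_combination (-(p.choose j : MvPolynomial (Fin 2) ℚ) * D ^ j * B ^ ((p - j) * p ^ k)) * hc
end

section
/- In the ring of length n Witt vectors W_n(Z) over any commutative ring Z, for all x, y ∈ Z one has the identity x+y (Teichmüller lift of x+y) = Σ_{i=0}^{n-1} V^i(ψ_{i+1}(x̲, y̲)), where x̲ denotes the Teichmüller representative (x,0,…,0), V is the Verschiebung operator, and ψ_{i+1} is evaluated on Witt vectors. -/
open MvPolynomial

namespace TeichAux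

variable {p : ℕ} [hp : Fact p.Prime]

/-- Any ring hom commutes with `aeval` of an integer polynomial. -/
lemma hom_aeval {A B : Type*} [CommRing A] [CommRing B] (g : A →+* B)
    (v : Fin 2 → A) (P : MvPolynomial (Fin 2) ℤ) :
    g (aeval v P) = aeval (fun i => g (v i)) P := by
  rw [aeval_def, aeval_def, eval₂_comp_left g]
  congr 1
  exact RingHom.ext_int _ _

lemma map_verschiebung_iterate {R S : Type*} [CommRing R] [CommRing S]
    (f : R →+* S) (i : ℕ) (u : WittVector p R) :
    WittVector.map f (WittVector.verschiebung^[i] u) =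
      WittVector.verschiebung^[i] (WittVector.map f u) := by
  induction i with
  | zero => rfl
  | succ i ih =>
    rw [Function.iterate_succ_apply', Function.iterate_succ_apply',
      WittVector.map_verschiebung, ih]

lemma ghost_verschiebung_iterate {R : Type*} [CommRing R] (u : WittVector p R)
    (i : ℕ) : ∀ k : ℕ, WittVector.ghostComponent k (WittVector.verschiebung^[i] u) =
      if i ≤ k then (p : R) ^ i * WittVector.ghostComponent (k - i) u else 0 := by
  induction i with
  | zero => intro k; simp
  | succ i ih =>
    intro k
    rw [Function.iterate_succ_apply']
    cases k with
    | zero =>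
      simp [WittVector.ghostComponent_zero_verschiebung]
    | succ k =>
      rw [WittVector.ghostComponent_verschiebung, ih k]
      by_cases h : i ≤ k
      · rw [if_pos h, if_pos (Nat.succ_le_succ h), Nat.succ_sub_succ, pow_succ]
        ring
      · rw [if_neg h, if_neg (fun hh => h (Nat.le_of_succ_le_succ hh)), mul_zero]

/-- Over a ℚ-algebra the ghost components of the sum are those of the Teichmüller lift. -/
lemma ghost_sum (p : ℕ) [hp : Fact p.Prime]
    (ψ : ℕ → MvPolynomial (Fin 2) ℤ)
    (hψ1 : ψ 1 = X 0 + X 1)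
    (hψ : ∀ i : ℕ, 1 < i →
      MvPolynomial.map (Int.castRingHom ℚ) (ψ i) =
        C (((p : ℚ) ^ (i - 1))⁻¹) *
          ((X 0 + X 1) ^ p ^ (i - 1) - (X 0 ^ p + X 1 ^ p) ^ p ^ (i - 2)))
    {S : Type*} [CommRing S] [Algebra ℚ S] (a b : S) (n k : ℕ) (hk : k < n) :
    WittVector.ghostComponent k (∑ i ∈ Finset.range n,
        WittVector.verschiebung^[i]
          (aeval ![WittVector.teichmuller p a, WittVector.teichmuller p b] (ψ (i + 1)))) =
      (a + b) ^ p ^ k := by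
  set f : ℕ → S := fun i => (a ^ p ^ (k - i) + b ^ p ^ (k - i)) ^ p ^ i with hf
  have key : ∀ j, j ≤ k →
      (p : S) ^ j * WittVector.ghostComponent (k - j)
        (aeval ![WittVector.teichmuller p a, WittVector.teichmuller p b] (ψ (j + 1))) =
      if j = 0 then f 0 else f j - f (j - 1) := by
    intro j hj
    rw [hom_aeval (WittVector.ghostComponent (k - j))]
    have hv : (fun i => WittVector.ghostComponent (k - j)
        (![WittVector.teichmuller p a, WittVector.teichmuller p b] i)) =
        ![a ^ p ^ (k - j), b ^ p ^ (k - j)] := by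
      funext i
      fin_cases i <;> simp [WittVector.ghostComponent_teichmuller]
    rw [hv]
    cases j with
    | zero =>
      simp [hψ1, hf]
    | succ j =>
      rw [if_neg (Nat.succ_ne_zero j)]
      have hmap : (aeval ![a ^ p ^ (k - (j + 1)), b ^ p ^ (k - (j + 1))] (ψ (j + 1 + 1)) : S)
          = aeval ![a ^ p ^ (k - (j + 1)), b ^ p ^ (k - (j + 1))]
              (MvPolynomial.map (Int.castRingHom ℚ) (ψ (j + 1 + 1))) := by
        rw [← algebraMap_int_eq, aeval_map_algebraMap]
      rw [hmap, hψ (j + 1 + 1) (by omega)]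
      have h1 : j + 1 + 1 - 1 = j + 1 := by omega
      have h2 : j + 1 + 1 - 2 = j := by omega
      rw [h1, h2]
      have hone : (p : S) ^ (j + 1) * algebraMap ℚ S (((p : ℚ) ^ (j + 1))⁻¹) = 1 := by
        have hpow : (p : S) ^ (j + 1) = algebraMap ℚ S ((p : ℚ) ^ (j + 1)) := by
          rw [map_pow, map_natCast]
        rw [hpow, ← map_mul, mul_inv_cancel₀ (pow_ne_zero _ (Nat.cast_ne_zero.2 hp.out.ne_zero)), map_one]
      have hexp : k - (j + 1) + 1 = k - j := by omega
      have hab : (a ^ p ^ (k - (j + 1))) ^ p = a ^ p ^ (k - j) := by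
        rw [← pow_mul, ← pow_succ, hexp]
      have hbb : (b ^ p ^ (k - (j + 1))) ^ p = b ^ p ^ (k - j) := by
        rw [← pow_mul, ← pow_succ, hexp]
      simp only [map_mul, map_sub, map_add, map_pow, aeval_C, aeval_X,
        Matrix.cons_val_zero, Matrix.cons_val_one, Matrix.head_cons]
      rw [← mul_assoc, hone, one_mul, hab, hbb]
      simp only [hf, Nat.add_sub_cancel]
  rw [map_sum]
  have hterm : ∀ i ∈ Finset.range n,
      WittVector.ghostComponent k (WittVector.verschiebung^[i]
        (aeval ![WittVector.teichmuller p a, WittVector.teichmuller p b] (ψ (i + 1)))) =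
      if i ≤ k then (p : S) ^ i * WittVector.ghostComponent (k - i)
        (aeval ![WittVector.teichmuller p a, WittVector.teichmuller p b] (ψ (i + 1))) else 0 :=
    fun i _ => ghost_verschiebung_iterate _ i k
  rw [Finset.sum_congr rfl hterm]
  rw [← Finset.sum_subset (Finset.range_subset_range.2 hk)
    (fun i _ hi => if_neg (fun hle => hi (Finset.mem_range.2 (Nat.lt_succ_of_le hle))))]
  have hstep : ∀ i ∈ Finset.range (k + 1),
      (if i ≤ k then (p : S) ^ i * WittVector.ghostComponent (k - i)
        (aeval ![WittVector.teichmuller p a, WittVector.teichmuller p b] (ψ (i + 1))) else 0) =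
      if i = 0 then f 0 else f i - f (i - 1) := by
    intro i hi
    have hik : i ≤ k := Nat.lt_succ_iff.1 (Finset.mem_range.1 hi)
    rw [if_pos hik, key i hik]
  rw [Finset.sum_congr rfl hstep, Finset.sum_range_succ']
  have : (∑ i ∈ Finset.range k,
      if i + 1 = 0 then f 0 else f (i + 1) - f (i + 1 - 1)) =
      ∑ i ∈ Finset.range k, (f (i + 1) - f i) := by
    refine Finset.sum_congr rfl fun i _ => ?_
    rw [if_neg (Nat.succ_ne_zero i), Nat.add_sub_cancel]
  rw [this, Finset.sum_range_sub, if_pos rfl]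
  simp [hf]

/-- Ghost components below `n` determine coefficients below `n` in a char-zero domain. -/
lemma coeff_eq_of_ghost {R : Type*} [CommRing R] [CharZero R] [NoZeroDivisors R]
    (A B : WittVector p R) (n : ℕ)
    (h : ∀ k < n, WittVector.ghostComponent k A = WittVector.ghostComponent k B) :
    ∀ k < n, A.coeff k = B.coeff k := by
  intro k
  induction k using Nat.strong_induction_on with
  | _ k ih =>
    intro hk
    have h1 := h k hk
    rw [WittVector.ghostComponent_apply, WittVector.ghostComponent_apply,
      aeval_wittPolynomial, aeval_wittPolynomial,
      Finset.sum_range_succ, Finset.sum_range_succ] at h1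
    have h2 : (∑ i ∈ Finset.range k, (p : R) ^ i * A.coeff i ^ p ^ (k - i)) =
        ∑ i ∈ Finset.range k, (p : R) ^ i * B.coeff i ^ p ^ (k - i) :=
      Finset.sum_congr rfl fun i hi => by
        rw [ih i (Finset.mem_range.1 hi) (lt_trans (Finset.mem_range.1 hi) hk)]
    rw [h2, Nat.sub_self, pow_zero, pow_one, pow_one, add_left_cancel_iff] at h1
    exact mul_left_cancel₀
      (pow_ne_zero _ (Nat.cast_ne_zero.2 hp.out.ne_zero)) h1

end TeichAux

/-- Universal case: coefficient equality over `MvPolynomial (Fin 2) ℤ`. -/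
lemma teich_aux_univ (p : ℕ) [hp : Fact p.Prime]
    (ψ : ℕ → MvPolynomial (Fin 2) ℤ)
    (hψ1 : ψ 1 = X 0 + X 1)
    (hψ : ∀ i : ℕ, 1 < i →
      MvPolynomial.map (Int.castRingHom ℚ) (ψ i) =
        C (((p : ℚ) ^ (i - 1))⁻¹) *
          ((X 0 + X 1) ^ p ^ (i - 1) - (X 0 ^ p + X 1 ^ p) ^ p ^ (i - 2)))
    (n : ℕ) : ∀ k < n,
    (WittVector.teichmuller p (X 0 + X 1 : MvPolynomial (Fin 2) ℤ)).coeff k =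
      (∑ i ∈ Finset.range n,
        WittVector.verschiebung^[i]
          (aeval ![WittVector.teichmuller p (X 0 : MvPolynomial (Fin 2) ℤ),
            WittVector.teichmuller p (X 1 : MvPolynomial (Fin 2) ℤ)] (ψ (i + 1)))).coeff k := by
  intro k hk
  have hφinj : Function.Injective (MvPolynomial.map (Int.castRingHom ℚ) :
      MvPolynomial (Fin 2) ℤ → MvPolynomial (Fin 2) ℚ) :=
    MvPolynomial.map_injective _ Int.cast_injective
  set φ : MvPolynomial (Fin 2) ℤ →+* MvPolynomial (Fin 2) ℚ :=
    MvPolynomial.map (Int.castRingHom ℚ) with hφ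
  apply hφinj
  rw [← WittVector.map_coeff φ, ← WittVector.map_coeff φ]
  have hmapA : WittVector.map φ (WittVector.teichmuller p (X 0 + X 1 : MvPolynomial (Fin 2) ℤ))
      = WittVector.teichmuller p (X 0 + X 1 : MvPolynomial (Fin 2) ℚ) := by
    rw [WittVector.map_teichmuller]
    simp [hφ]
  have hmapB : WittVector.map φ (∑ i ∈ Finset.range n,
      WittVector.verschiebung^[i]
        (aeval ![WittVector.teichmuller p (X 0 : MvPolynomial (Fin 2) ℤ),
          WittVector.teichmuller p (X 1 : MvPolynomial (Fin 2) ℤ)] (ψ (i + 1)))) =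
      ∑ i ∈ Finset.range n,
        WittVector.verschiebung^[i]
          (aeval ![WittVector.teichmuller p (X 0 : MvPolynomial (Fin 2) ℚ),
            WittVector.teichmuller p (X 1 : MvPolynomial (Fin 2) ℚ)] (ψ (i + 1))) := by
    rw [map_sum]
    refine Finset.sum_congr rfl fun i _ => ?_
    rw [TeichAux.map_verschiebung_iterate, TeichAux.hom_aeval (WittVector.map φ)]
    have hv : (fun j => WittVector.map φ
        (![WittVector.teichmuller p (X 0 : MvPolynomial (Fin 2) ℤ),
          WittVector.teichmuller p (X 1 : MvPolynomial (Fin 2) ℤ)] j)) =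
        ![WittVector.teichmuller p (X 0 : MvPolynomial (Fin 2) ℚ),
          WittVector.teichmuller p (X 1 : MvPolynomial (Fin 2) ℚ)] := by
      funext j
      fin_cases j <;> simp [WittVector.map_teichmuller, hφ]
    rw [hv]
  rw [hmapA, hmapB]
  refine TeichAux.coeff_eq_of_ghost _ _ n (fun m hm => ?_) k hk
  rw [TeichAux.ghost_sum p ψ hψ1 hψ _ _ n m hm, WittVector.ghostComponent_teichmuller]

/-- in the ring of length-`n` Witt vectors over any commutative ring `Z`,
`(x+y)̲ = Σ_{i=0}^{n-1} V^i (ψ_{i+1}(x̲, y̲))`, where `x̲` is the Teichmüller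
representative and `V` the Verschiebung.  The integral polynomials `ψ` are characterized by
`ψ_1 = x + y` and `ψ_i = ((x+y)^{p^{i-1}} - (x^p+y^p)^{p^{i-2}})/p^{i-1}` for `i > 1`;
the identity in `W_n(Z)` is expressed by truncating an identity of (infinite) Witt vectors
to length `n`. -/
theorem teichmuller_add_eq_sum_verschiebung_psi
    (p : ℕ) [Fact p.Prime]
    (ψ : ℕ → MvPolynomial (Fin 2) ℤ)
    (hψ1 : ψ 1 = X 0 + X 1)
    (hψ : ∀ i : ℕ, 1 < i →
      MvPolynomial.map (Int.castRingHom ℚ) (ψ i) =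
        C (((p : ℚ) ^ (i - 1))⁻¹) *
          ((X 0 + X 1) ^ p ^ (i - 1) - (X 0 ^ p + X 1 ^ p) ^ p ^ (i - 2)))
    (Z : Type*) [CommRing Z] (n : ℕ) (x y : Z) :
    WittVector.truncate n (WittVector.teichmuller p (x + y)) =
      WittVector.truncate n (∑ i ∈ Finset.range n,
        WittVector.verschiebung^[i]
          (aeval ![WittVector.teichmuller p x, WittVector.teichmuller p y] (ψ (i + 1)))) := by
  classical
  set g : MvPolynomial (Fin 2) ℤ →+* Z := (aeval ![x, y] : MvPolynomial (Fin 2) ℤ →ₐ[ℤ] Z).toRingHom with hgdef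
  have hg0 : g (X 0) = x := by simp [hgdef]
  have hg1 : g (X 1) = y := by simp [hgdef]
  have hA : WittVector.teichmuller p (x + y) =
      WittVector.map g (WittVector.teichmuller p (X 0 + X 1 : MvPolynomial (Fin 2) ℤ)) := by
    rw [WittVector.map_teichmuller]
    congr 1
    rw [map_add, hg0, hg1]
  have hB : (∑ i ∈ Finset.range n,
      WittVector.verschiebung^[i]
        (aeval ![WittVector.teichmuller p x, WittVector.teichmuller p y] (ψ (i + 1)))) =
      WittVector.map g (∑ i ∈ Finset.range n,
        WittVector.verschiebung^[i]
          (aeval ![WittVector.teichmuller p (X 0 : MvPolynomial (Fin 2) ℤ),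
            WittVector.teichmuller p (X 1 : MvPolynomial (Fin 2) ℤ)] (ψ (i + 1)))) := by
    rw [map_sum]
    refine Finset.sum_congr rfl fun i _ => ?_
    rw [TeichAux.map_verschiebung_iterate, TeichAux.hom_aeval (WittVector.map g)]
    have hv : (fun j => WittVector.map g
        (![WittVector.teichmuller p (X 0 : MvPolynomial (Fin 2) ℤ),
          WittVector.teichmuller p (X 1 : MvPolynomial (Fin 2) ℤ)] j)) =
        ![WittVector.teichmuller p x, WittVector.teichmuller p y] := by
      funext j
      fin_cases j <;> simp [WittVector.map_teichmuller, hg0, hg1]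
    rw [hv]
  apply TruncatedWittVector.ext
  intro i
  rw [WittVector.coeff_truncate, WittVector.coeff_truncate, hA, hB,
    WittVector.map_coeff, WittVector.map_coeff,
    teich_aux_univ p ψ hψ1 hψ n i i.2]
end

section
/- Let A be an associative ring and m ≥ 0. If x, y ∈ A satisfy [x,y] ≡ 0 mod p^{m+1}·A and [x,[x,y]] ≡ 0 mod p^{m+2}·A and [y,[x,y]] ≡ 0 mod p^{m+2}·A, and p is an odd prime, then (xy)^p ≡ x^p y^p mod p^{m+2}·A. -/
private lemma commAux {R : Type*} [Ring R] (X Y C : R)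
    (hC : Y * X = X * Y - C) (hCY : C * Y = Y * C) (hC2 : C * C = 0) :
    ∀ k : ℕ, Y ^ k * (X * C) = X * (Y ^ k * C) := by
  have hCYc : Commute C Y := hCY
  intro k
  induction k with
  | zero => simp
  | succ k ih =>
    have hCYk : C * Y ^ k = Y ^ k * C := hCYc.pow_right k
    calc Y ^ (k+1) * (X * C) = Y * (Y ^ k * (X * C)) := by rw [pow_succ', mul_assoc]
      _ = Y * (X * (Y ^ k * C)) := by rw [ih]
      _ = (Y * X) * (Y ^ k * C) := by rw [← mul_assoc]
      _ = (X * Y - C) * (Y ^ k * C) := by rw [hC]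
      _ = X * (Y * (Y ^ k * C)) - (C * Y ^ k) * C := by
          rw [sub_mul, mul_assoc X Y, ← mul_assoc C (Y^k) C]
      _ = X * (Y ^ (k+1) * C) - Y ^ k * (C * C) := by
          rw [hCYk, mul_assoc (Y^k) C C, ← mul_assoc Y (Y^k) C, ← pow_succ']
      _ = X * (Y ^ (k+1) * C) := by rw [hC2, mul_zero, sub_zero]

private lemma swapAux {R : Type*} [Ring R] (X Y C : R)
    (hC : Y * X = X * Y - C) (hCY : C * Y = Y * C) :
    ∀ k : ℕ, Y ^ (k+1) * X = X * Y ^ (k+1) - (k+1) • (Y ^ k * C) := by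
  have hCYc : Commute C Y := hCY
  intro k
  induction k with
  | zero => simpa using hC
  | succ k ih =>
    have hCYk1 : C * Y ^ (k+1) = Y ^ (k+1) * C := hCYc.pow_right (k+1)
    calc Y ^ (k+2) * X = Y * (Y ^ (k+1) * X) := by rw [pow_succ', mul_assoc]
      _ = Y * (X * Y ^ (k+1) - (k+1) • (Y ^ k * C)) := by rw [ih]
      _ = Y * (X * Y ^ (k+1)) - (k+1) • (Y * (Y ^ k * C)) := by
          rw [mul_sub, mul_smul_comm]
      _ = (Y * X) * Y ^ (k+1) - (k+1) • (Y ^ (k+1) * C) := by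
          rw [← mul_assoc, ← mul_assoc Y (Y^k) C, ← pow_succ']
      _ = (X * Y - C) * Y ^ (k+1) - (k+1) • (Y ^ (k+1) * C) := by rw [hC]
      _ = X * Y ^ (k+2) - C * Y ^ (k+1) - (k+1) • (Y ^ (k+1) * C) := by
          rw [sub_mul, mul_assoc X Y (Y^(k+1)), ← pow_succ']
      _ = X * Y ^ (k+2) - 1 • (Y ^ (k+1) * C) - (k+1) • (Y ^ (k+1) * C) := by
          rw [hCYk1, one_smul]
      _ = X * Y ^ (k+2) - (k+2) • (Y ^ (k+1) * C) := by
          rw [succ_nsmul (Y^(k+1)*C) (k+1), one_smul, sub_sub, add_comm (Y^(k+1)*C)]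

private lemma mainAux {R : Type*} [Ring R] (X Y C : R)
    (hC : Y * X = X * Y - C) (hCX : C * X = X * C) (hCY : C * Y = Y * C)
    (hC2 : C * C = 0) :
    ∀ n : ℕ, (X * Y) ^ (n+1)
      = X ^ (n+1) * Y ^ (n+1) - ((n+1).choose 2) • (X ^ n * (Y ^ n * C)) := by
  intro n
  induction n with
  | zero => simp
  | succ n ih =>
    have e1 := swapAux X Y C hC hCY n
    have e2 := commAux X Y C hC hCY hC2 n
    have hT2 : X^n * (Y^n * C) * (X * Y) = X^(n+1) * (Y^(n+1) * C) := by
      calc X^n * (Y^n * C) * (X * Y)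
          = X^n * (Y^n * ((C * X) * Y)) := by
            rw [mul_assoc (X^n) (Y^n*C) (X*Y), mul_assoc (Y^n) C (X*Y),
              ← mul_assoc C X Y]
        _ = X^n * ((Y^n * (X * C)) * Y) := by
            rw [hCX, ← mul_assoc (Y^n) (X*C) Y]
        _ = X^n * ((X * (Y^n * C)) * Y) := by rw [e2]
        _ = X^n * (X * (Y^n * (C * Y))) := by
            rw [mul_assoc X (Y^n*C) Y, mul_assoc (Y^n) C Y]
        _ = X^n * (X * ((Y^n * Y) * C)) := by rw [hCY, ← mul_assoc (Y^n) Y C]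
        _ = X^(n+1) * (Y^(n+1) * C) := by rw [← pow_succ, ← mul_assoc (X^n) X, ← pow_succ]
    have hT1 : X^(n+1) * Y^(n+1) * (X * Y)
        = X^(n+2) * Y^(n+2) - (n+1) • (X^(n+1) * (Y^(n+1) * C)) := by
      calc X^(n+1) * Y^(n+1) * (X * Y)
          = X^(n+1) * ((Y^(n+1) * X) * Y) := by
            rw [mul_assoc (X^(n+1)) (Y^(n+1)) (X*Y), ← mul_assoc (Y^(n+1)) X Y]
        _ = X^(n+1) * ((X * Y^(n+1) - (n+1) • (Y^n * C)) * Y) := by rw [e1]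
        _ = X^(n+1) * ((X * Y^(n+1)) * Y) - (n+1) • (X^(n+1) * ((Y^n * C) * Y)) := by
            rw [sub_mul, smul_mul_assoc, mul_sub, mul_smul_comm]
        _ = X^(n+2) * Y^(n+2) - (n+1) • (X^(n+1) * (Y^n * (C * Y))) := by
            rw [mul_assoc X (Y^(n+1)) Y, ← pow_succ, ← mul_assoc (X^(n+1)) X (Y^(n+2)),
              ← pow_succ, mul_assoc (Y^n) C Y]
        _ = X^(n+2) * Y^(n+2) - (n+1) • (X^(n+1) * (Y^(n+1) * C)) := by
            rw [hCY, ← mul_assoc (Y^n) Y C, ← pow_succ]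
    calc (X*Y)^(n+2)
        = (X^(n+1) * Y^(n+1) - ((n+1).choose 2) • (X^n * (Y^n * C))) * (X*Y) := by
          rw [pow_succ, ih]
      _ = X^(n+1) * Y^(n+1) * (X*Y)
            - ((n+1).choose 2) • (X^n * (Y^n * C) * (X*Y)) := by
          rw [sub_mul, smul_mul_assoc]
      _ = X^(n+2) * Y^(n+2) - (n+1) • (X^(n+1) * (Y^(n+1) * C))
            - ((n+1).choose 2) • (X^(n+1) * (Y^(n+1) * C)) := by rw [hT1, hT2]
      _ = X^(n+2) * Y^(n+2) - ((n+2).choose 2) • (X^(n+1) * (Y^(n+1) * C)) := by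
          have hcc : (n+2).choose 2 = (n+1) + (n+1).choose 2 := by
            rw [Nat.choose_succ_succ (n+1) 1, Nat.choose_one_right]
          rw [hcc, add_smul (n+1) ((n+1).choose 2), sub_sub]

/-- if `p` is an odd prime, `A` an associative ring, and `x, y ∈ A` satisfy
`[x,y] ≡ 0 mod p^{m+1}A`, `[x,[x,y]] ≡ 0 mod p^{m+2}A` and `[y,[x,y]] ≡ 0 mod p^{m+2}A`,
then `(xy)^p ≡ x^p y^p mod p^{m+2}A`. -/
theorem mul_pow_p_congr (p : ℕ) (hp : p.Prime) (hodd : p ≠ 2)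
    (A : Type*) [Ring A] (m : ℕ) (x y : A)
    (h1 : ∃ a : A, x * y - y * x = (p : A) ^ (m + 1) * a)
    (h2 : ∃ a : A, x * (x * y - y * x) - (x * y - y * x) * x = (p : A) ^ (m + 2) * a)
    (h3 : ∃ a : A, y * (x * y - y * x) - (x * y - y * x) * y = (p : A) ^ (m + 2) * a) :
    ∃ a : A, (x * y) ^ p - x ^ p * y ^ p = (p : A) ^ (m + 2) * a := by
  obtain ⟨c1, hc1⟩ := h1
  obtain ⟨a2, ha2⟩ := h2
  obtain ⟨a3, ha3⟩ := h3
  have hcomm : ∀ (k : ℕ) (z : A), z * (p : A) ^ k = (p : A) ^ k * z :=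
    fun k z => ((Nat.cast_commute p z).pow_left k).eq.symm
  set S : Set A := {z | ∃ a : A, z = (p : A) ^ (m + 2) * a} with hSdef
  have hS0 : (0 : A) ∈ S := ⟨0, by simp⟩
  have hSadd : ∀ {u v : A}, u ∈ S → v ∈ S → u + v ∈ S := by
    rintro u v ⟨a, ha⟩ ⟨b, hb⟩; exact ⟨a + b, by rw [ha, hb, mul_add]⟩
  have hSneg : ∀ {u : A}, u ∈ S → -u ∈ S := by
    rintro u ⟨a, ha⟩; exact ⟨-a, by rw [ha, mul_neg]⟩
  have hSml : ∀ {u v : A}, v ∈ S → u * v ∈ S := by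
    rintro u v ⟨a, ha⟩
    exact ⟨u * a, by rw [ha, ← mul_assoc, hcomm, mul_assoc]⟩
  have hSmr : ∀ {u v : A}, u ∈ S → u * v ∈ S := by
    rintro u v ⟨a, ha⟩; exact ⟨a * v, by rw [ha, mul_assoc]⟩
  let I : TwoSidedIdeal A := TwoSidedIdeal.mk' S hS0 hSadd hSneg hSml hSmr
  let f : A →+* I.ringCon.Quotient := RingCon.mk' I.ringCon
  have hf : ∀ z : A, f z = 0 ↔ z ∈ S := by
    intro z
    rw [show (0 : I.ringCon.Quotient) = f (0 : A) from (map_zero f).symm]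
    constructor
    · intro h
      have := (TwoSidedIdeal.rel_iff I z 0).1 (I.ringCon.eq.1 h)
      rw [sub_zero, TwoSidedIdeal.mem_mk'] at this
      exact this
    · intro h
      exact I.ringCon.eq.2 ((TwoSidedIdeal.rel_iff I z 0).2
        (by rw [sub_zero, TwoSidedIdeal.mem_mk']; exact h))
  set X := f x with hX
  set Y := f y with hY
  set C := f (x * y - y * x) with hCdef
  have hCeq : C = X * Y - Y * X := by rw [hCdef, map_sub, map_mul, map_mul]
  have hC : Y * X = X * Y - C := by rw [hCeq]; abel
  have h0x : X * C - C * X = 0 := by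
    rw [hX, hCdef, ← map_mul, ← map_mul, ← map_sub]
    exact (hf _).2 ⟨a2, ha2⟩
  have hCX : C * X = X * C := (sub_eq_zero.mp h0x).symm
  have h0y : Y * C - C * Y = 0 := by
    rw [hY, hCdef, ← map_mul, ← map_mul, ← map_sub]
    exact (hf _).2 ⟨a3, ha3⟩
  have hCY : C * Y = Y * C := (sub_eq_zero.mp h0y).symm
  have hC2 : C * C = 0 := by
    rw [hCdef, ← map_mul]
    apply (hf _).2
    refine ⟨(p : A) ^ m * (c1 * c1), ?_⟩
    rw [hc1, ← mul_assoc, mul_assoc ((p:A)^(m+1)) c1 ((p:A)^(m+1)), hcomm (m+1) c1,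
      ← mul_assoc, ← pow_add, mul_assoc, show (m+1)+(m+1) = (m+2)+m by omega,
      pow_add, mul_assoc]
  have hpC : (p : ℕ) • C = 0 := by
    rw [nsmul_eq_mul, show ((p : ℕ) : I.ringCon.Quotient) = f ((p : ℕ) : A) from
      (map_natCast f p).symm, hCdef, ← map_mul]
    apply (hf _).2
    exact ⟨c1, by rw [hc1, ← mul_assoc, ← pow_succ']⟩
  have hp1 : p - 1 + 1 = p := Nat.succ_pred_eq_of_pos hp.pos
  have key := mainAux X Y C hC hCX hCY hC2 (p - 1)
  rw [hp1] at key
  obtain ⟨r, hr⟩ : 2 ∣ p - 1 := (Nat.Odd.sub_odd (hp.odd_of_ne_two hodd) odd_one).two_dvd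
  have hch : p.choose 2 = r * p := by
    rw [Nat.choose_two_right, hr, mul_comm p (2*r), mul_assoc,
      Nat.mul_div_cancel_left _ (by norm_num : 0 < 2)]
  have hterm : (p.choose 2) • (X ^ (p-1) * (Y ^ (p-1) * C)) = 0 := by
    rw [hch, mul_smul, show p • (X^(p-1)*(Y^(p-1)*C)) = X^(p-1)*(Y^(p-1)*((p:ℕ) • C)) from
      by rw [mul_smul_comm, mul_smul_comm], hpC, mul_zero, mul_zero, smul_zero]
  have hfin : f ((x * y) ^ p - x ^ p * y ^ p) = 0 := by
    rw [map_sub, map_pow, map_mul, map_mul, map_pow, map_pow, ← hX, ← hY, key, hterm,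
      sub_zero, sub_self]
  exact (hf _).1 hfin
end

section
/- Let p be an odd prime, L the Lie ring over Z[1/2] freely generated as a module by X, Y, [X,Y] with [X,Y] central, and U its universal enveloping algebra. Then in U the identity (X+Y)^p = Σ_{i=0}^{p} C(p,i) X^i Y^{p-i} + p·c, holds where c lies in the ideal generated by [X,Y]; consequently, in an associative ring A, if x, y satisfy [x,y] ≡ 0 mod p^{m+1}·A (with [x,y] commuting with x and y modulo p^{m+2}), then (x+y)^p ≡ Σ_{i=0}^{p} C(p,i) x^i y^{p-i} mod p^{m+2}·A. -/
namespace AddPowP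
open Finset


def Kc : ℕ → ℕ → ℕ → ℕ → ℤ
  | 0, a, b, c => if a = 0 ∧ b = 0 ∧ c = 0 then 1 else 0
  | n+1, a, b, c =>
      (if b = 0 then 0 else Kc n a (b-1) c) +
      (if c = 0 then 0 else Kc n a b (c-1)) -
      (if a = 0 then 0 else ((c : ℤ) + 1) * Kc n (a-1) b (c+1))

lemma Kc_eq_zero : ∀ (n a b c : ℕ), 2*a+b+c ≠ n → Kc n a b c = 0 := by
  intro n
  induction n with
  | zero => intro a b c h; rw [Kc, if_neg]; omega
  | succ n ih =>
      intro a b c h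
      rw [Kc]
      have t1 : (if b = 0 then (0:ℤ) else Kc n a (b-1) c) = 0 := by
        split_ifs with hb
        · rfl
        · exact ih a (b-1) c (by omega)
      have t2 : (if c = 0 then (0:ℤ) else Kc n a b (c-1)) = 0 := by
        split_ifs with hc
        · rfl
        · exact ih a b (c-1) (by omega)
      have t3 : (if a = 0 then (0:ℤ) else ((c : ℤ) + 1) * Kc n (a-1) b (c+1)) = 0 := by
        split_ifs with ha
        · rfl
        · rw [ih (a-1) b (c+1) (by omega), mul_zero]
      rw [t1, t2, t3]; ring

lemma Kc_zero : ∀ (n b c : ℕ), Kc n 0 b c = if b + c = n then (n.choose b : ℤ) else 0 := by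
  intro n
  induction n with
  | zero =>
      intro b c
      rw [Kc]
      by_cases hb : b = 0 <;> by_cases hc : c = 0 <;> simp [hb, hc] <;> omega
  | succ n ih =>
      intro b c
      rw [Kc]
      rcases b with _ | b <;> rcases c with _ | c
      · simp
      · rw [if_pos rfl, if_neg (Nat.succ_ne_zero c), if_pos rfl, Nat.succ_sub_one]
        simp only [ih]
        by_cases h : c = n
        · rw [if_pos (by omega), if_pos (by omega)]; simp
        · rw [if_neg (by omega), if_neg (by omega)]; ring
      · rw [if_neg (Nat.succ_ne_zero b), if_pos rfl, if_pos rfl, Nat.succ_sub_one]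
        simp only [ih]
        by_cases h : b = n
        · rw [if_pos (by omega), if_pos (by omega)]; subst h; simp [Nat.choose_self]
        · rw [if_neg (by omega), if_neg (by omega)]; ring
      · rw [if_neg (Nat.succ_ne_zero b), if_neg (Nat.succ_ne_zero c), if_pos rfl,
          Nat.succ_sub_one, Nat.succ_sub_one]
        simp only [ih]
        by_cases h : b + c + 1 = n
        · rw [if_pos (by omega), if_pos (by omega), if_pos (by omega), Nat.choose_succ_succ]
          push_cast; ring
        · rw [if_neg (by omega), if_neg (by omega), if_neg (by omega)]; ring

lemma Kc_fact : ∀ (n a b c : ℕ), 2*a+b+c = n →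
    ((a.factorial : ℤ) * b.factorial * c.factorial * 2^a) * Kc n a b c
      = (-1)^a * n.factorial := by
  intro n
  induction n with
  | zero =>
      intro a b c h
      obtain ⟨rfl, rfl, rfl⟩ : a = 0 ∧ b = 0 ∧ c = 0 := by omega
      simp [Kc]
  | succ n ih =>
      intro a b c h
      rw [Kc]
      have hb : ((a.factorial : ℤ) * b.factorial * c.factorial * 2^a) *
          (if b = 0 then 0 else Kc n a (b-1) c) = (b : ℤ) * ((-1)^a * n.factorial) := by
        rcases b with _ | b
        · simp
        · rw [if_neg (Nat.succ_ne_zero b), Nat.succ_sub_one]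
          have h2 := ih a b c (by omega)
          rw [Nat.factorial_succ]
          push_cast
          linear_combination ((b : ℤ) + 1) * h2
      have hc : ((a.factorial : ℤ) * b.factorial * c.factorial * 2^a) *
          (if c = 0 then 0 else Kc n a b (c-1)) = (c : ℤ) * ((-1)^a * n.factorial) := by
        rcases c with _ | c
        · simp
        · rw [if_neg (Nat.succ_ne_zero c), Nat.succ_sub_one]
          have h2 := ih a b c (by omega)
          rw [Nat.factorial_succ c]
          push_cast
          linear_combination ((c : ℤ) + 1) * h2
      have ha : ((a.factorial : ℤ) * b.factorial * c.factorial * 2^a) *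
          (if a = 0 then 0 else ((c : ℤ) + 1) * Kc n (a-1) b (c+1))
            = -((2 : ℤ) * a) * ((-1)^a * n.factorial) := by
        rcases a with _ | a
        · simp
        · rw [if_neg (Nat.succ_ne_zero a), Nat.succ_sub_one]
          have h2 := ih a b (c+1) (by omega)
          rw [Nat.factorial_succ a, pow_succ]
          rw [Nat.factorial_succ c] at h2
          push_cast at h2 ⊢
          linear_combination (2 * ((a : ℤ) + 1)) * h2
      rw [mul_sub, mul_add, hb, hc, ha, Nat.factorial_succ]
      have hs : (b : ℤ) + c + 2 * a = n + 1 := by push_cast; omega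
      push_cast
      linear_combination ((-1 : ℤ)^a * n.factorial) * hs

lemma Kc_dvd (p : ℕ) (hp : p.Prime) (hodd : p ≠ 2) (a b c : ℕ) (ha : a ≠ 0)
    (h : 2*a+b+c = p) : (p : ℤ) ∣ Kc p a b c := by
  have key := Kc_fact p a b c h
  have hpp : Prime (p : ℤ) := Nat.prime_iff_prime_int.mp hp
  have hdvd : (p : ℤ) ∣ ((a.factorial : ℤ) * b.factorial * c.factorial * 2^a) * Kc p a b c := by
    rw [key]
    exact Dvd.dvd.mul_left (Int.natCast_dvd_natCast.mpr (Nat.dvd_factorial hp.pos le_rfl)) _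
  have hnd : ¬ (p : ℤ) ∣ ((a.factorial : ℤ) * b.factorial * c.factorial * 2^a) := by
    intro hd
    rcases hpp.dvd_mul.mp hd with hd | hd
    · rcases hpp.dvd_mul.mp hd with hd | hd
      · rcases hpp.dvd_mul.mp hd with hd | hd
        · have := (Nat.Prime.dvd_factorial hp).mp (Int.natCast_dvd_natCast.mp hd)
          omega
        · have := (Nat.Prime.dvd_factorial hp).mp (Int.natCast_dvd_natCast.mp hd)
          omega
      · have := (Nat.Prime.dvd_factorial hp).mp (Int.natCast_dvd_natCast.mp hd)
        omega
    · have h2 : (p : ℤ) ∣ (2 : ℤ) := hpp.dvd_of_dvd_pow hd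
      have h3 : p ∣ 2 := by exact_mod_cast h2
      have := (Nat.prime_dvd_prime_iff_eq hp Nat.prime_two).mp h3
      exact hodd this
  rcases hpp.dvd_mul.mp hdvd with hd | hd
  · exact absurd hd hnd
  · exact hd

lemma Kc_def (n a b c : ℕ) : Kc (n+1) a b c =
      (if b = 0 then 0 else Kc n a (b-1) c) +
      (if c = 0 then 0 else Kc n a b (c-1)) -
      (if a = 0 then 0 else ((c : ℤ) + 1) * Kc n (a-1) b (c+1)) := by
  rw [Kc]

lemma Kc_zero' : Kc 0 0 0 0 = 1 := by rw [Kc]; simp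
section Alg
variable {U : Type} [Ring U] (X Y Z : U)

lemma sum_shift {M : Type} [AddCommMonoid M] (n : ℕ) (f : ℕ → M) (h0 : f 0 = 0) :
    ∑ i ∈ range (n+1), f i = ∑ i ∈ range n, f (i+1) := by
  rw [Finset.sum_range_succ', h0, add_zero]

lemma sum_drop {M : Type} [AddCommMonoid M] (n : ℕ) (f : ℕ → M) (h : f n = 0) :
    ∑ i ∈ range (n+1), f i = ∑ i ∈ range n, f i := by
  rw [Finset.sum_range_succ, h, add_zero]

lemma YpowX (hZY : Commute Z Y) (hYX : Y * X = X * Y - Z) :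
    ∀ c : ℕ, Y ^ (c+1) * X = X * Y^(c+1) - (c+1) • (Y^c * Z) := by
  intro c
  induction c with
  | zero => simpa using hYX
  | succ c ih =>
      calc Y^(c+2) * X = Y * (Y^(c+1) * X) := by rw [← mul_assoc, ← pow_succ']
        _ = Y * (X * Y^(c+1)) - (c+1) • (Y * (Y^c * Z)) := by
              rw [ih, mul_sub, mul_smul_comm]
        _ = (Y * X) * Y^(c+1) - (c+1) • (Y^(c+1) * Z) := by
              rw [← mul_assoc, ← mul_assoc, ← pow_succ']
        _ = X * Y^(c+2) - Y^(c+1) * Z - (c+1) • (Y^(c+1) * Z) := by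
              rw [hYX, sub_mul, mul_assoc, ← pow_succ', ((hZY.pow_right (c+1)).symm.eq : Y^(c+1) * Z = Z * Y^(c+1))]
        _ = X * Y^(c+2) - (c+2) • (Y^(c+1) * Z) := by
              simp only [succ_nsmul]; abel

lemma term_step (hZX : Commute Z X) (hZY : Commute Z Y) (hYX : Y * X = X * Y - Z) (b c a : ℕ) :
    (X^b * Y^c * Z^a) * (X + Y) =
      X^(b+1) * Y^c * Z^a + X^b * Y^(c+1) * Z^a - c • (X^b * Y^(c-1) * Z^(a+1)) := by
  have hZaX : Z^a * X = X * Z^a := (hZX.pow_left a).eq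
  have hZaY : Z^a * Y = Y * Z^a := (hZY.pow_left a).eq
  rcases c with _ | c
  · rw [mul_add]
    rw [mul_assoc (X^b * Y^0) (Z^a) X, hZaX, mul_assoc (X^b * Y^0) (Z^a) Y, hZaY]
    simp only [pow_zero, mul_one, zero_smul, sub_zero, zero_nsmul]
    rw [← mul_assoc, ← mul_assoc]
    congr 2
    · rw [← pow_succ]
    · rw [zero_add, pow_one]
  · rw [mul_add, mul_assoc (X^b * Y^(c+1)) (Z^a) X, hZaX, mul_assoc (X^b * Y^(c+1)) (Z^a) Y, hZaY]
    rw [← mul_assoc (X^b * Y^(c+1)) X (Z^a), ← mul_assoc (X^b * Y^(c+1)) Y (Z^a)]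
    rw [mul_assoc (X^b) (Y^(c+1)) X, YpowX X Y Z hZY hYX c]
    rw [mul_assoc (X^b) (Y^(c+1)) Y, ← pow_succ]
    rw [mul_sub, mul_smul_comm, sub_mul, smul_mul_assoc]
    rw [← mul_assoc (X^b) X (Y^(c+1)), ← pow_succ]
    rw [Nat.succ_sub_one]
    rw [mul_assoc (X^b) (Y^c * Z) (Z^a), mul_assoc (Y^c) Z (Z^a), ← pow_succ',
      ← mul_assoc (X^b) (Y^c) (Z^(a+1))]
    abel
end Alg

section Triples
variable {M : Type} [AddCommMonoid M]

lemma tripleA (n : ℕ) (g : ℕ → ℕ → ℕ → M)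
    (hb : ∀ a b c, n+1 ≤ b → g a b c = 0) (hc : ∀ a b c, n+1 ≤ c → g a b c = 0) :
    (∑ a ∈ range (n+2), ∑ b ∈ range (n+2), ∑ c ∈ range (n+2),
      if a = 0 then 0 else g a b c)
    = ∑ a ∈ range (n+1), ∑ b ∈ range (n+1), ∑ c ∈ range (n+1), g (a+1) b c := by
  rw [sum_shift (n+1) _ (by simp)]
  refine Finset.sum_congr rfl fun a _ => ?_
  rw [sum_drop (n+1) _ (by
    refine Finset.sum_eq_zero fun c _ => ?_
    rw [if_neg (Nat.succ_ne_zero a), hb (a+1) (n+1) c le_rfl])]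
  refine Finset.sum_congr rfl fun b _ => ?_
  rw [sum_drop (n+1) _ (by rw [if_neg (Nat.succ_ne_zero a), hc (a+1) b (n+1) le_rfl])]
  exact Finset.sum_congr rfl fun c _ => if_neg (Nat.succ_ne_zero a)

lemma tripleB (n : ℕ) (g : ℕ → ℕ → ℕ → M)
    (ha : ∀ a b c, n+1 ≤ a → g a b c = 0) (hc : ∀ a b c, n+1 ≤ c → g a b c = 0) :
    (∑ a ∈ range (n+2), ∑ b ∈ range (n+2), ∑ c ∈ range (n+2),
      if b = 0 then 0 else g a b c)
    = ∑ a ∈ range (n+1), ∑ b ∈ range (n+1), ∑ c ∈ range (n+1), g a (b+1) c := by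
  rw [sum_drop (n+1) _ (by
    refine Finset.sum_eq_zero fun b _ => ?_
    refine Finset.sum_eq_zero fun c _ => ?_
    split_ifs with h
    · rfl
    · exact ha (n+1) b c le_rfl)]
  refine Finset.sum_congr rfl fun a _ => ?_
  rw [sum_shift (n+1) _ (by simp)]
  refine Finset.sum_congr rfl fun b _ => ?_
  rw [sum_drop (n+1) _ (by rw [if_neg (Nat.succ_ne_zero b), hc a (b+1) (n+1) le_rfl])]
  exact Finset.sum_congr rfl fun c _ => if_neg (Nat.succ_ne_zero b)

lemma tripleC (n : ℕ) (g : ℕ → ℕ → ℕ → M)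
    (ha : ∀ a b c, n+1 ≤ a → g a b c = 0) (hb : ∀ a b c, n+1 ≤ b → g a b c = 0) :
    (∑ a ∈ range (n+2), ∑ b ∈ range (n+2), ∑ c ∈ range (n+2),
      if c = 0 then 0 else g a b c)
    = ∑ a ∈ range (n+1), ∑ b ∈ range (n+1), ∑ c ∈ range (n+1), g a b (c+1) := by
  rw [sum_drop (n+1) _ (by
    refine Finset.sum_eq_zero fun b _ => ?_
    refine Finset.sum_eq_zero fun c _ => ?_
    split_ifs with h
    · rfl
    · exact ha (n+1) b c le_rfl)]
  refine Finset.sum_congr rfl fun a _ => ?_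
  rw [sum_drop (n+1) _ (by
    refine Finset.sum_eq_zero fun c _ => ?_
    split_ifs with h
    · rfl
    · exact hb a (n+1) c le_rfl)]
  refine Finset.sum_congr rfl fun b _ => ?_
  rw [sum_shift (n+1) _ (by simp)]
  exact Finset.sum_congr rfl fun c _ => if_neg (Nat.succ_ne_zero c)

end Triples

lemma expand {U : Type} [Ring U] (X Y Z : U)
    (hZX : Commute Z X) (hZY : Commute Z Y) (hYX : Y * X = X * Y - Z) :
    ∀ n : ℕ, (X + Y)^n = ∑ a ∈ range (n+1), ∑ b ∈ range (n+1), ∑ c ∈ range (n+1),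
      Kc n a b c • (X^b * Y^c * Z^a) := by
  intro n
  induction n with
  | zero => simp [Kc_zero']
  | succ n ih =>
      rw [pow_succ, ih]
      simp only [Finset.sum_mul, smul_mul_assoc, term_step X Y Z hZX hZY hYX, smul_sub,
        smul_add, ← natCast_zsmul, smul_smul, Finset.sum_add_distrib, Finset.sum_sub_distrib]
      conv_rhs => simp only [Kc_def, sub_smul, add_smul, ite_smul, zero_smul,
        Finset.sum_add_distrib, Finset.sum_sub_distrib]
      rw [tripleB n (fun a b c => Kc n a (b-1) c • (X^b * Y^c * Z^a))
            (fun a b c h => by simp only [Kc_eq_zero n a (b-1) c (by omega), zero_smul])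
            (fun a b c h => by simp only [Kc_eq_zero n a (b-1) c (by omega), zero_smul]),
          tripleC n (fun a b c => Kc n a b (c-1) • (X^b * Y^c * Z^a))
            (fun a b c h => by simp only [Kc_eq_zero n a b (c-1) (by omega), zero_smul])
            (fun a b c h => by simp only [Kc_eq_zero n a b (c-1) (by omega), zero_smul]),
          tripleA n (fun a b c => (((c:ℤ)+1) * Kc n (a-1) b (c+1)) • (X^b * Y^c * Z^a))
            (fun a b c h => by simp only [Kc_eq_zero n (a-1) b (c+1) (by omega), mul_zero, zero_smul])
            (fun a b c h => by simp only [Kc_eq_zero n (a-1) b (c+1) (by omega), mul_zero, zero_smul])]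
      simp only [Nat.add_sub_cancel]
      congr 1
      -- remaining: S3 = A3'
      refine Finset.sum_congr rfl fun a _ => ?_
      refine Finset.sum_congr rfl fun b _ => ?_
      rw [sum_shift n _ (by simp)]
      rw [← sum_drop n _ (by rw [Kc_eq_zero n a b (n+1) (by omega)]; simp)]
      refine Finset.sum_congr rfl fun c _ => ?_
      rw [Nat.add_sub_cancel]
      push_cast
      ring_nf


lemma key {U : Type} [Ring U] (p : ℕ) (hp : p.Prime) (hodd : p ≠ 2) (X Y : U)
    (h1 : Commute (X*Y - Y*X) X) (h2 : Commute (X*Y - Y*X) Y) :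
    ∃ d ∈ Subring.closure {X, Y}, (X + Y)^p =
      (∑ i ∈ range (p+1), (p.choose i : U) * (X^i * Y^(p-i))) + (p:U) * ((X*Y - Y*X) * d) := by
  set Z := X*Y - Y*X with hZ
  have hYX : Y * X = X * Y - Z := by rw [hZ]; abel
  have hexp := expand X Y Z h1 h2 hYX p
  rw [Finset.sum_range_succ'] at hexp
  set k : ℕ → ℕ → ℕ → ℤ := fun a b c => Kc p (a+1) b c / p with hkdef
  have hk : ∀ a b c : ℕ, Kc p (a+1) b c = (p:ℤ) * k a b c := by
    intro a b c
    by_cases h : 2*(a+1)+b+c = p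
    · exact (Int.mul_ediv_cancel' (Kc_dvd p hp hodd (a+1) b c (Nat.succ_ne_zero a) h)).symm
    · simp [hkdef, Kc_eq_zero p (a+1) b c h]
  have hXm : X ∈ Subring.closure ({X, Y} : Set U) :=
    Subring.subset_closure (Set.mem_insert X {Y})
  have hYm : Y ∈ Subring.closure ({X, Y} : Set U) :=
    Subring.subset_closure (Set.mem_insert_of_mem _ rfl)
  have hZm : Z ∈ Subring.closure ({X, Y} : Set U) :=
    sub_mem (mul_mem hXm hYm) (mul_mem hYm hXm)
  refine ⟨∑ a ∈ range p, ∑ b ∈ range (p+1), ∑ c ∈ range (p+1),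
      k a b c • (X^b * Y^c * Z^a), ?_, ?_⟩
  · exact Subring.sum_mem _ fun a _ => Subring.sum_mem _ fun b _ => Subring.sum_mem _
      fun c _ => zsmul_mem (mul_mem (mul_mem (pow_mem hXm b) (pow_mem hYm c))
        (pow_mem hZm a)) _
  · rw [hexp, add_comm]
    congr 1
    · -- binomial part
      refine Finset.sum_congr rfl fun b hb => ?_
      have hble : b ≤ p := by simp at hb; omega
      rw [Finset.sum_eq_single (p - b)]
      · rw [Kc_zero, if_pos (by omega), pow_zero, mul_one, zsmul_eq_mul, Int.cast_natCast]
      · intro c hc hne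
        rw [Kc_zero, if_neg (by simp at hc; omega), zero_smul]
      · intro h
        exact absurd (Finset.mem_range.mpr (by omega)) h
    · -- the p-divisible part
      have hterm : ∀ a b c : ℕ, Kc p (a+1) b c • (X^b * Y^c * Z^(a+1))
          = (p:U) * (Z * (k a b c • (X^b * Y^c * Z^a))) := by
        intro a b c
        have hcom : Commute Z (X^b * Y^c * Z^a) :=
          (((h1.pow_right b).mul_right (h2.pow_right c)).mul_right
            ((Commute.refl Z).pow_right a))
        have e1 : X^b * Y^c * Z^(a+1) = Z * (X^b * Y^c * Z^a) := by
          rw [hcom.eq, mul_assoc (X^b * Y^c) (Z^a) Z, ← pow_succ]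
        rw [e1, hk, mul_smul, mul_smul_comm, zsmul_eq_mul, Int.cast_natCast]
      calc (∑ a ∈ range p, ∑ b ∈ range (p+1), ∑ c ∈ range (p+1),
            Kc p (a+1) b c • (X^b * Y^c * Z^(a+1)))
          = ∑ a ∈ range p, ∑ b ∈ range (p+1), ∑ c ∈ range (p+1),
            (p:U) * (Z * (k a b c • (X^b * Y^c * Z^a))) := by
              refine Finset.sum_congr rfl fun a _ => Finset.sum_congr rfl fun b _ =>
                Finset.sum_congr rfl fun c _ => hterm a b c
        _ = (p:U) * (Z * ∑ a ∈ range p, ∑ b ∈ range (p+1), ∑ c ∈ range (p+1),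
            k a b c • (X^b * Y^c * Z^a)) := by
              simp only [Finset.mul_sum]

def modCon (A : Type) [Ring A] (q : ℕ) : RingCon A where
  r a b := ∃ t, a - b = (q : A) * t
  iseqv := by
    constructor
    · intro a; exact ⟨0, by simp⟩
    · rintro a b ⟨t, ht⟩; exact ⟨-t, by rw [mul_neg, ← ht]; abel⟩
    · rintro a b c ⟨t, ht⟩ ⟨s, hs⟩; exact ⟨t + s, by rw [mul_add, ← ht, ← hs]; abel⟩
  add' := by
    rintro a b c d ⟨t, ht⟩ ⟨s, hs⟩; exact ⟨t + s, by rw [mul_add, ← ht, ← hs]; abel⟩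
  mul' := by
    rintro a b c d ⟨t, ht⟩ ⟨s, hs⟩
    refine ⟨a * s + t * d, ?_⟩
    have hc : a * ((q:A) * s) = (q:A) * (a * s) := by
      rw [← mul_assoc, ← (Nat.cast_commute q a).eq, mul_assoc]
    calc a * c - b * d = a * (c - d) + (a - b) * d := by noncomm_ring
      _ = a * ((q:A) * s) + ((q:A) * t) * d := by rw [ht, hs]
      _ = (q:A) * (a * s) + (q:A) * (t * d) := by rw [hc, mul_assoc]
      _ = (q:A) * (a * s + t * d) := by rw [mul_add]

lemma modCon_rel {A : Type} [Ring A] (q : ℕ) (a b : A) :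
    (modCon A q) a b ↔ ∃ t, a - b = (q : A) * t := Iff.rfl

lemma part2 (p : ℕ) (hp : p.Prime) (hodd : p ≠ 2) (A : Type) [Ring A] (m : ℕ) (x y : A)
    (h0 : ∃ a : A, x * y - y * x = (p : A) ^ (m + 1) * a)
    (hx : ∃ a : A, x * (x * y - y * x) - (x * y - y * x) * x = (p : A) ^ (m + 2) * a)
    (hy : ∃ a : A, y * (x * y - y * x) - (x * y - y * x) * y = (p : A) ^ (m + 2) * a) :
    ∃ c : A, (x + y) ^ p =
      (∑ i ∈ Finset.range (p + 1), (p.choose i : A) * (x ^ i * y ^ (p - i))) +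
        (p : A) ^ (m + 2) * c := by
  obtain ⟨a0, ha0⟩ := h0
  obtain ⟨ax, hax⟩ := hx
  obtain ⟨ay, hay⟩ := hy
  set con := modCon A (p ^ (m + 2)) with hcon
  have hcast : ((p ^ (m + 2) : ℕ) : A) = (p : A) ^ (m + 2) := by push_cast; ring
  have hz : ((x : con.Quotient) * (y : con.Quotient) - (y : con.Quotient) * (x : con.Quotient))
      = ((x * y - y * x : A) : con.Quotient) := rfl
  have h1 : Commute ((x : con.Quotient) * ↑y - ↑y * ↑x) (↑x : con.Quotient) := by
    rw [Commute, SemiconjBy, hz, ← RingCon.coe_mul, ← RingCon.coe_mul, RingCon.eq]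
    exact ⟨-ax, by rw [hcast, mul_neg, ← hax]; abel⟩
  have h2 : Commute ((x : con.Quotient) * ↑y - ↑y * ↑x) (↑y : con.Quotient) := by
    rw [Commute, SemiconjBy, hz, ← RingCon.coe_mul, ← RingCon.coe_mul, RingCon.eq]
    exact ⟨-ay, by rw [hcast, mul_neg, ← hay]; abel⟩
  obtain ⟨d, -, hEq⟩ := key p hp hodd (x : con.Quotient) (y : con.Quotient) h1 h2
  obtain ⟨d₀, rfl⟩ := Quotient.mk''_surjective d
  have hd : (Quotient.mk'' d₀ : con.Quotient) = (d₀ : con.Quotient) := rfl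
  rw [hd] at hEq
  have hsum : ((∑ i ∈ Finset.range (p + 1), (p.choose i : A) * (x ^ i * y ^ (p - i)) : A) :
      con.Quotient)
      = ∑ i ∈ Finset.range (p + 1),
          (p.choose i : con.Quotient) * ((x : con.Quotient) ^ i * (y : con.Quotient) ^ (p - i)) := by
    calc ((∑ i ∈ Finset.range (p + 1), (p.choose i : A) * (x ^ i * y ^ (p - i)) : A) :
        con.Quotient)
        = con.mk' (∑ i ∈ Finset.range (p + 1), (p.choose i : A) * (x ^ i * y ^ (p - i))) := rfl
      _ = ∑ i ∈ Finset.range (p + 1), con.mk' ((p.choose i : A) * (x ^ i * y ^ (p - i))) :=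
          map_sum _ _ _
      _ = _ := Finset.sum_congr rfl fun i _ => rfl
  have hp2 : (p : con.Quotient) * (((x : con.Quotient) * ↑y - ↑y * ↑x) * ↑d₀)
      = (((p : A) ^ (m + 2) * (a0 * d₀) : A) : con.Quotient) := by
    rw [hz, ha0]
    rw [show ((p : con.Quotient)) = (((p : ℕ) : A) : con.Quotient) from rfl,
      ← RingCon.coe_mul, ← RingCon.coe_mul]
    congr 1
    calc (p:A) * ((p:A)^(m+1) * a0 * d₀) = ((p:A) * (p:A)^(m+1)) * (a0 * d₀) := by
          rw [mul_assoc ((p:A)^(m+1)) a0 d₀, ← mul_assoc]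
      _ = (p:A)^(m+2) * (a0 * d₀) := by
          rw [show (p:A)^(m+2) = (p:A) * (p:A)^(m+1) from pow_succ' _ _]
  rw [hp2, ← hsum] at hEq
  rw [show ((x:con.Quotient) + ↑y) = ((x + y : A) : con.Quotient) from rfl,
    ← RingCon.coe_pow, ← RingCon.coe_add] at hEq
  obtain ⟨t, ht⟩ := (RingCon.eq con).mp hEq
  rw [hcast] at ht
  refine ⟨a0 * d₀ + t, ?_⟩
  rw [mul_add]
  rw [sub_eq_iff_eq_add] at ht
  rw [ht]
  abel

end AddPowP



/-- (i) In the universal enveloping algebra of the Lie ring over `ℤ[1/2]` freely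
generated by `X`, `Y`, `[X,Y]` with `[X,Y]` central — equivalently, in any ring `U` in which `2`
is invertible containing elements `X, Y` whose commutator `[X,Y]` commutes with `X` and `Y` —
one has `(X+Y)^p = Σ_{i=0}^{p} C(p,i) X^i Y^{p-i} + p·c` where `c` lies in the ideal generated
by `[X,Y]` (inside the subring generated by `X` and `Y`).
(ii) Consequently, in an associative ring `A`, if `[x,y] ≡ 0 mod p^{m+1}A` and `[x,y]` commutes
with `x` and `y` modulo `p^{m+2}A`, then `(x+y)^p ≡ Σ_{i=0}^p C(p,i) x^i y^{p-i} mod p^{m+2}A`. -/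
theorem add_pow_p_binomial (p : ℕ) (hp : p.Prime) (hodd : p ≠ 2) :
    (∀ (U : Type) [Ring U], ∀ _ : Invertible (2 : U), ∀ X Y : U,
      Commute (X * Y - Y * X) X → Commute (X * Y - Y * X) Y →
      ∃ d ∈ Subring.closure {X, Y},
        (X + Y) ^ p =
          (∑ i ∈ Finset.range (p + 1), (p.choose i : U) * (X ^ i * Y ^ (p - i))) +
            (p : U) * ((X * Y - Y * X) * d)) ∧
    (∀ (A : Type) [Ring A], ∀ (m : ℕ) (x y : A),
      (∃ a : A, x * y - y * x = (p : A) ^ (m + 1) * a) →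
      (∃ a : A, x * (x * y - y * x) - (x * y - y * x) * x = (p : A) ^ (m + 2) * a) →
      (∃ a : A, y * (x * y - y * x) - (x * y - y * x) * y = (p : A) ^ (m + 2) * a) →
      ∃ c : A,
        (x + y) ^ p =
          (∑ i ∈ Finset.range (p + 1), (p.choose i : A) * (x ^ i * y ^ (p - i))) +
            (p : A) ^ (m + 2) * c) := by
  constructor
  · intro U _ _ X Y h1 h2
    exact AddPowP.key p hp hodd X Y h1 h2
  · intro A _ m x y h0 hx hy
    exact AddPowP.part2 p hp hodd A m x y h0 hx hy
end

section
/- Let A be an associative ring, p a prime, and i ≥ 0. If z, x ∈ A satisfy that [z,x] ≡ 0 mod p^{i+1}·A and [z,[z,x]] ≡ 0 mod p^{i+3}·A, and p is odd, then [z^p, x] ≡ p·z^{p-1}·[z,x] mod p^{i+3}·A. -/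
/-- if `p` is an odd prime, `A` an associative ring, `i ≥ 0`, and `z, x ∈ A`
satisfy `[z,x] ≡ 0 mod p^{i+1}A` and `[z,[z,x]] ≡ 0 mod p^{i+3}A`, then
`[z^p, x] ≡ p z^{p-1} [z,x] mod p^{i+3}A`. -/
theorem comm_pow_p (p : ℕ) (hp : p.Prime) (hodd : p ≠ 2)
    (A : Type*) [Ring A] (i : ℕ) (z x : A)
    (h1 : ∃ a : A, z * x - x * z = (p : A) ^ (i + 1) * a)
    (h2 : ∃ a : A, z * (z * x - x * z) - (z * x - x * z) * z = (p : A) ^ (i + 3) * a) :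
    ∃ a : A, (z ^ p * x - x * z ^ p) - (p : A) * z ^ (p - 1) * (z * x - x * z) =
      (p : A) ^ (i + 3) * a := by
  obtain ⟨a2, ha2⟩ := h2
  set c : A := z * x - x * z with hc
  set q : A := (p : A) ^ (i + 3) with hqdef
  have hq : ∀ t : A, Commute q t := fun t => (Nat.cast_commute p t).pow_left _
  -- c commutes with powers of z modulo q
  have key : ∀ m : ℕ, ∃ b : A, c * z ^ m - z ^ m * c = q * b := by
    intro m
    induction m with
    | zero => exact ⟨0, by simp⟩
    | succ m ih =>
      obtain ⟨b, hb⟩ := ih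
      refine ⟨b * z + z ^ m * (-a2), ?_⟩
      have h3 : c * z - z * c = q * (-a2) := by rw [mul_neg, ← ha2]; abel
      have e1 : c * z ^ (m+1) - z ^ (m+1) * c
          = (c * z ^ m - z ^ m * c) * z + z ^ m * (c * z - z * c) := by
        rw [pow_succ]; noncomm_ring
      rw [e1, hb, h3, mul_add, mul_assoc, (hq (z ^ m)).left_comm]
  have main : ∀ n : ℕ, ∃ b : A,
      z ^ (n+1) * x - x * z ^ (n+1) - (n+1) • (z ^ n * c) = q * b := by
    intro n
    induction n with
    | zero => exact ⟨0, by simp [hc]⟩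
    | succ n ih =>
      obtain ⟨b, hb⟩ := ih
      obtain ⟨b', hb'⟩ := key (n+1)
      refine ⟨z * b + b', ?_⟩
      have e1 : ∀ u w : A, z * u * x - x * (z * u)
          = z * (u * x - x * u - (n+1) • (w * c))
            + (n+1) • (z * (w * c))
            + (c * u - u * c) + u * c := by
        intro u w; rw [hc]; noncomm_ring
      have e2 : z * (z ^ n * c) = z ^ (n+1) * c := by
        rw [pow_succ', mul_assoc]
      have e3 : (n+1+1) • (z ^ (n+1) * c)
          = (n+1) • (z ^ (n+1) * c) + z ^ (n+1) * c := by
        rw [succ_nsmul]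
      rw [show z ^ (n+1+1) = z * z ^ (n+1) from pow_succ' z (n+1)]
      rw [e1 (z ^ (n+1)) (z ^ n), hb, hb', e2, e3, mul_add, (hq z).left_comm]
      abel
  obtain ⟨b, hb⟩ := main (p - 1)
  refine ⟨b, ?_⟩
  have hp1 : p - 1 + 1 = p := Nat.succ_pred_eq_of_pos hp.pos
  rw [hp1] at hb
  rw [← hb, nsmul_eq_mul, ← mul_assoc]
end

section
/- Let A be an associative ring and p an odd prime. If z, x ∈ A with z central modulo p, then for every i ≥ 0, [z^{p^i}, x] ≡ p^i · z^{p^i - 1} · [z,x] mod p^{i+2}·A, provided the iterated commutator conditions hold (each [z, c] for c central mod p^{j} is central mod p^{j+1}). -/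
section
variable {A : Type*} [Ring A]

private lemma aux_pow_comm0 (P : ℕ) (y c r : A) (h : y*c - c*y = P • r) :
    ∀ N : ℕ, ∃ b : A, y^N*c - c*y^N = P • b := by
  intro N
  induction N with
  | zero => exact ⟨0, by simp⟩
  | succ N ih =>
    obtain ⟨b, hb⟩ := ih
    refine ⟨y*b + r*y^N, ?_⟩
    have h1 : y^(N+1)*c - c*y^(N+1) = y*(y^N*c - c*y^N) + (y*c - c*y)*y^N := by
      rw [pow_succ']; noncomm_ring
    rw [h1, hb, h, mul_smul_comm, smul_mul_assoc, ← smul_add]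

private lemma aux_pow_comm1 (P : ℕ) (z c r : A)
    (hr : z*(z*c-c*z) - (z*c-c*z)*z = P • r) :
    ∀ N : ℕ, ∃ e : A, z^N*c - c*z^N = N • (z^(N-1)*(z*c-c*z)) + P • e := by
  intro N
  induction N with
  | zero => exact ⟨0, by simp⟩
  | succ N ih =>
    rcases Nat.eq_zero_or_pos N with h0 | hN
    · subst h0
      exact ⟨0, by simp⟩
    obtain ⟨e, he⟩ := ih
    obtain ⟨e2, he2⟩ := aux_pow_comm0 P z (z*c-c*z) r hr N
    refine ⟨z*e - e2, ?_⟩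
    have h1 : z^(N+1)*c - c*z^(N+1) = z*(z^N*c - c*z^N) + (z*c - c*z)*z^N := by
      rw [pow_succ']; noncomm_ring
    have h3 : z*(z^(N-1)*(z*c-c*z)) = z^N*(z*c-c*z) := by
      rw [← mul_assoc, ← pow_succ']
      congr 2
      omega
    have h2 : (z*c-c*z)*z^N = z^N*(z*c-c*z) - P • e2 := by
      rw [← he2]; noncomm_ring
    rw [h1, he, h2]; simp only [mul_add, mul_smul_comm, h3, succ_nsmul, Nat.add_sub_cancel, smul_sub]
    abel

end

/-- iterated commutator lemma.  Let `A` be an associative ring flat over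
`ℤ/p^{n+1}ℤ`, `p` an odd prime, and `z, x ∈ A` with `z` central modulo `p`
(i.e. all commutators with `z` lie in `pA`).  Assume the iterated commutator condition:
for every `j` and every `c` central modulo `p^j`, the element `[z,c]` is central modulo
`p^{j+1}`.  Then for every `i ≥ 0`,
`[z^{p^i}, x] ≡ p^i z^{p^i - 1} [z,x] mod p^{i+2}A`. -/
theorem comm_pow_p_iterated (p n : ℕ) (hp : p.Prime) (hodd : p ≠ 2)
    (A : Type*) [Ring A]
    (hchar : (p : A) ^ (n + 1) = 0)
    (hflat : ∀ k ≤ n + 1, ∀ a : A, (p : A) ^ k * a = 0 → ∃ b : A, a = (p : A) ^ (n + 1 - k) * b)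
    (z x : A)
    (hz : ∀ a : A, ∃ b : A, z * a - a * z = (p : A) * b)
    (hiter : ∀ (j : ℕ) (c : A), (∀ a : A, ∃ b : A, c * a - a * c = (p : A) ^ j * b) →
      ∀ a : A, ∃ b : A, (z * c - c * z) * a - a * (z * c - c * z) = (p : A) ^ (j + 1) * b) :
    ∀ i : ℕ, ∃ b : A,
      z ^ p ^ i * x - x * z ^ p ^ i =
        (p : A) ^ i * z ^ (p ^ i - 1) * (z * x - x * z) + (p : A) ^ (i + 2) * b := by
  have hz' : ∀ b : A, ∃ c : A, z*b - b*z = p • c := by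
    intro b; obtain ⟨c, hc⟩ := hz b; exact ⟨c, by rw [hc, nsmul_eq_mul]⟩
  suffices main : ∀ i : ℕ, ∀ a : A, ∃ b : A,
      z ^ p ^ i * a - a * z ^ p ^ i =
        (p : A) ^ i * z ^ (p ^ i - 1) * (z * a - a * z) + (p : A) ^ (i + 2) * b by
    intro i; exact main i x
  intro i
  induction i with
  | zero => intro a; exact ⟨0, by simp⟩
  | succ i ih =>
    intro a
    set m := p ^ i with hm_def
    have hm : 0 < m := pow_pos hp.pos i
    obtain ⟨b₀, hb₀⟩ := ih a
    have hb₀' : z^m*a - a*z^m = p^i • (z^(m-1)*(z*a - a*z)) + p^(i+2) • b₀ := by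
      rw [hb₀, mul_assoc, ← Nat.cast_pow, ← Nat.cast_pow, ← nsmul_eq_mul, ← nsmul_eq_mul]
    set u := z*a - a*z with hu_def
    clear_value u
    obtain ⟨u₁, hu₁⟩ := hz' a
    obtain ⟨v₂, hv₂⟩ := hz' u₁
    obtain ⟨v₃, hv₃⟩ := hz' v₂
    have htv : z*u - u*z = (p^2) • v₂ := by
      rw [hu_def, hu₁, mul_smul_comm, smul_mul_assoc, ← smul_sub, hv₂, smul_smul, ← pow_two]
    have htr : z*(z*u - u*z) - (z*u - u*z)*z = (p^3) • v₃ := by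
      rw [htv, mul_smul_comm, smul_mul_assoc, ← smul_sub, hv₃, smul_smul]
      congr 1
    obtain ⟨d₀, hd₀⟩ := hz' b₀
    have inner : ∀ k : ℕ, ∃ (T : ℕ) (h : A), 2*T = k*(k-1) ∧
        z^(k*m)*a - a*z^(k*m) = (k * p^i) • (z^(k*m-1)*u)
          + (k * p^(i+2)) • (b₀ * z^((k-1)*m))
          - (m*T*p^(i+2)) • (z^(k*m-2)*v₂)
          + p^(i+3) • h := by
      intro k
      induction k with
      | zero => exact ⟨0, 0, by simp, by simp⟩
      | succ k ihk =>
        rcases Nat.eq_zero_or_pos k with rfl | hk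
        · refine ⟨0, 0, by simp, ?_⟩
          simpa using hb₀'
        obtain ⟨T, h, hTk, hk'⟩ := ihk
        obtain ⟨e, he⟩ := aux_pow_comm1 (p^3) z u v₃ htr (k*m)
        obtain ⟨d, hd⟩ := aux_pow_comm0 p z b₀ d₀ hd₀ m
        have hkm : 1 ≤ k*m := Nat.mul_pos hk hm
        have ekm : (k+1)*m = k*m + m := by ring
        have ekk : k*m = (k-1)*m + m := by
          have h1 : (k-1+1)*m = (k-1)*m + m := by ring
          have h2 : k-1+1 = k := Nat.succ_pred_eq_of_pos hk
          rw [h2] at h1; exact h1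
        have ex1 : m + (k*m - 1) = (k+1)*m - 1 := by omega
        have ex4 : m + (k-1)*m = k*m := by omega
        -- T'
        refine ⟨T + k, z^m*h + k • (d * z^((k-1)*m)) - z^(m-1)*e, ?_, ?_⟩
        · obtain ⟨k', rfl⟩ : ∃ k', k = k'+1 := ⟨k-1, by omega⟩
          simp only [Nat.add_sub_cancel] at hTk ⊢
          have h7 : (k'+1+1)*(k'+1) = (k'+1)*k' + 2*(k'+1) := by ring
          omega
        have hT1 : z^m * (z^(k*m-1)*u) = z^((k+1)*m-1)*u := by
          rw [← mul_assoc, ← pow_add, ex1]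
        have hT2 : z^m * (b₀ * z^((k-1)*m)) = b₀ * z^(k*m) + p • (d * z^((k-1)*m)) := by
          have hzb : z^m*b₀ = b₀*z^m + p • d := by rw [← hd]; abel
          rw [← mul_assoc, hzb, add_mul, smul_mul_assoc, mul_assoc, ← pow_add, ex4]
        have hT3 : (m*T*p^(i+2)) • (z^m * (z^(k*m-2)*v₂))
            = (m*T*p^(i+2)) • (z^((k+1)*m-2)*v₂) := by
          rcases Nat.lt_or_ge (k*m) 2 with h2 | h2
          · have hk1 : k = 1 := by
              rcases Nat.lt_or_ge k 2 with hx | hx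
              · omega
              · exfalso; have : 2 ≤ k*m := le_trans hx (Nat.le_mul_of_pos_right _ hm); omega
            have hT0 : T = 0 := by rw [hk1] at hTk; omega
            simp [hT0]
          · have ex5 : m + (k*m-2) = (k+1)*m - 2 := by omega
            rw [← mul_assoc, ← pow_add, ex5]
        have ex2 : (m-1) + k*m = (k+1)*m - 1 := by omega
        have ex3 : (m-1) + (k*m-1) = (k+1)*m - 2 := by omega
        have hU0 : u * z^(k*m) = z^(k*m)*u - ((k*m*p^2) • (z^(k*m-1)*v₂) + p^3 • e) := by
          have h5 : z^(k*m-1)*(z*u - u*z) = p^2 • (z^(k*m-1)*v₂) := by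
            rw [htv, mul_smul_comm]
          rw [h5, smul_smul] at he
          rw [← he]; abel
        have hU : z^(m-1) * (u * z^(k*m))
            = z^((k+1)*m-1)*u - ((k*m*p^2) • (z^((k+1)*m-2)*v₂) + p^3 • (z^(m-1)*e)) := by
          rw [hU0, mul_sub, mul_add, mul_smul_comm, mul_smul_comm, ← mul_assoc, ← mul_assoc,
            ← pow_add, ← pow_add, ex2, ex3]
        have hsplit : z^((k+1)*m)*a - a*z^((k+1)*m)
            = z^m*(z^(k*m)*a - a*z^(k*m)) + (z^m*a - a*z^m)*z^(k*m) := by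
          have h6 : (k+1)*m = m + k*m := by ring
          rw [h6, pow_add]; noncomm_ring
        rw [hsplit, hk', hb₀']
        simp only [Nat.add_sub_cancel]
        have Dma : ∀ a b c : A, a*(b+c) = a*b + a*c := fun a b c => mul_add a b c
        have Dam : ∀ a b c : A, (a+b)*c = a*c + b*c := fun a b c => add_mul a b c
        have Dms : ∀ a b c : A, a*(b-c) = a*b - a*c := fun a b c => mul_sub a b c
        have Dsm : ∀ a b c : A, (a-b)*c = a*c - b*c := fun a b c => sub_mul a b c
        have Das : ∀ a b c : A, a*b*c = a*(b*c) := fun a b c => mul_assoc a b c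
        simp only [Dma, Dam, Dms, Dsm, mul_smul_comm, smul_mul_assoc, Das]
        rw [hT1, hT2, hT3, hU]
        module
    obtain ⟨T, h, hT2p, hfin⟩ := inner p
    have hpT : p ∣ T := by
      have hco : Nat.Coprime p 2 := (Nat.coprime_primes hp Nat.prime_two).mpr hodd
      exact hco.dvd_of_dvd_mul_left ⟨p-1, hT2p⟩
    obtain ⟨s, rfl⟩ := hpT
    have hpm : p * m = p^(i+1) := by rw [hm_def, pow_succ, Nat.mul_comm]
    rw [hpm] at hfin
    refine ⟨b₀*z^((p-1)*m) - (m*s) • (z^(p^(i+1)-2)*v₂) + h, ?_⟩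
    rw [mul_assoc, ← Nat.cast_pow, ← Nat.cast_pow, ← nsmul_eq_mul, ← nsmul_eq_mul, hfin]
    module
end

section
/- Let A_n be a flat associative algebra over R_n flat over Z/p^{n+1}Z. For x ∈ Z_i and y ∈ Z_j with 0 ≤ i ≤ j ≤ n and liftings x̃, ỹ ∈ A_n, the element [x̃,ỹ] mod p^{i+j+2} lies in the center Z_{i+j+1} of A_{i+j+1}. -/
/-- Lemma 1.1(2): with `A = A_n` flat over `ℤ/p^{n+1}ℤ`, if `x` lifts an
element of the center `Z_i` (i.e. `x` is central modulo `p^{i+1}`) and `y` lifts an element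
of `Z_j`, with `0 ≤ i ≤ j` and `i + j + 1 ≤ n`, then `[x,y] mod p^{i+j+2}` is central in
`A_{i+j+1}`, i.e. all commutators with `[x,y]` lie in `p^{i+j+2}A`. -/
theorem comm_lift_central_higher (p n : ℕ) (hp : p.Prime)
    (A : Type*) [Ring A]
    (hchar : (p : A) ^ (n + 1) = 0)
    (hflat : ∀ k ≤ n + 1, ∀ a : A, (p : A) ^ k * a = 0 → ∃ b : A, a = (p : A) ^ (n + 1 - k) * b)
    (i j : ℕ) (hij : i ≤ j) (hjn : i + j + 1 ≤ n) (x y : A)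
    (hx : ∀ a : A, ∃ b : A, x * a - a * x = (p : A) ^ (i + 1) * b)
    (hy : ∀ a : A, ∃ b : A, y * a - a * y = (p : A) ^ (j + 1) * b) :
    ∀ a : A, ∃ b : A,
      (x * y - y * x) * a - a * (x * y - y * x) = (p : A) ^ (i + j + 2) * b := by
  intro a
  obtain ⟨b1, hb1⟩ := hy a
  obtain ⟨b2, hb2⟩ := hx b1
  obtain ⟨c1, hc1⟩ := hx a
  obtain ⟨c2, hc2⟩ := hy c1
  refine ⟨b2 - c2, ?_⟩
  have jac : (x * y - y * x) * a - a * (x * y - y * x)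
      = (x * (y * a - a * y) - (y * a - a * y) * x)
        - (y * (x * a - a * x) - (x * a - a * x) * y) := by noncomm_ring
  have hpc : ∀ (k : ℕ) (z : A), (p : A) ^ k * z = z * (p : A) ^ k := fun k z =>
    ((Nat.commute_cast z p).pow_right k).symm.eq
  rw [jac, hb1, hc1]
  calc x * ((p : A) ^ (j + 1) * b1) - (p : A) ^ (j + 1) * b1 * x
        - (y * ((p : A) ^ (i + 1) * c1) - (p : A) ^ (i + 1) * c1 * y)
      = (p : A) ^ (j + 1) * (x * b1 - b1 * x) - (p : A) ^ (i + 1) * (y * c1 - c1 * y) := by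
        rw [mul_sub, mul_sub, ← mul_assoc, ← mul_assoc, ← hpc, ← hpc, mul_assoc, mul_assoc]
        simp only [mul_assoc]
    _ = (p : A) ^ (j + 1) * ((p : A) ^ (i + 1) * b2) - (p : A) ^ (i + 1) * ((p : A) ^ (j + 1) * c2) := by
        rw [hb2, hc2]
    _ = (p : A) ^ (i + j + 2) * (b2 - c2) := by
        rw [← mul_assoc, ← mul_assoc, ← pow_add, ← pow_add, mul_sub]
        ring_nf
end

section
/- Let A_n be a flat associative algebra over R_n flat over Z/p^{n+1}Z, n ≥ 1. Define {x,y} = (1/p)[x̃,ỹ] mod p for x, y in the center Z_0 of A_0 (liftings x̃, ỹ ∈ A_1). Then {,} is well-defined (independent of liftings), is a biderivation (a derivation in each argument over R_0), and if n > 1 it satisfies the Jacobi identity, making Z_0 a Poisson algebra. -/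
/-- Let `A = A_n` be flat over `ℤ/p^{n+1}ℤ`, `n ≥ 1` (so `p^{n+1} = 0` in `A`
and multiplication by `p^k` has kernel `p^{n+1-k}A`).  Elements of the center `Z_0` of
`A_0 = A/pA` are represented by liftings `x ∈ A` central modulo `p` (all commutators with
`x` lie in `pA`).  The bracket `{x,y} = (1/p)[x̃,ỹ] mod p` is represented by any `u` with
`p·u ≡ [x̃,ỹ] mod p²`.  Then:
(1) well-definedness: `u mod p` does not depend on the choices of liftings;
(2) `{,}` is a biderivation: it is additive and satisfies Leibniz's rule in the first
argument (hence, being antisymmetric, in each argument);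
(3) if `n > 1`, `{,}` satisfies the Jacobi identity, so `Z_0` is a Poisson algebra. -/
theorem bracket_well_defined_biderivation_jacobi (p n : ℕ) (hp : p.Prime) (hn : 1 ≤ n)
    (A : Type*) [Ring A]
    (hchar : (p : A) ^ (n + 1) = 0)
    (hflat : ∀ k ≤ n + 1, ∀ a : A, (p : A) ^ k * a = 0 → ∃ b : A, a = (p : A) ^ (n + 1 - k) * b) :
    -- (1) independence of the liftings
    (∀ x x' y y' u u' : A,
      (∀ a : A, ∃ b : A, x * a - a * x = (p : A) * b) →
      (∀ a : A, ∃ b : A, y * a - a * y = (p : A) * b) →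
      (∃ a : A, x - x' = (p : A) * a) → (∃ a : A, y - y' = (p : A) * a) →
      (∃ a : A, (x * y - y * x) - (p : A) * u = (p : A) ^ 2 * a) →
      (∃ a : A, (x' * y' - y' * x') - (p : A) * u' = (p : A) ^ 2 * a) →
      ∃ a : A, u - u' = (p : A) * a) ∧
    -- (2a) additivity in the first argument
    (∀ x x' y u u' v : A,
      (∀ a : A, ∃ b : A, x * a - a * x = (p : A) * b) →
      (∀ a : A, ∃ b : A, x' * a - a * x' = (p : A) * b) →
      (∀ a : A, ∃ b : A, y * a - a * y = (p : A) * b) →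
      (∃ a : A, (x * y - y * x) - (p : A) * u = (p : A) ^ 2 * a) →
      (∃ a : A, (x' * y - y * x') - (p : A) * u' = (p : A) ^ 2 * a) →
      (∃ a : A, ((x + x') * y - y * (x + x')) - (p : A) * v = (p : A) ^ 2 * a) →
      ∃ a : A, v - (u + u') = (p : A) * a) ∧
    -- (2b) the Leibniz rule in the first argument: {xz, y} = x{z,y} + z{x,y}
    (∀ x z y u v w : A,
      (∀ a : A, ∃ b : A, x * a - a * x = (p : A) * b) →
      (∀ a : A, ∃ b : A, z * a - a * z = (p : A) * b) →
      (∀ a : A, ∃ b : A, y * a - a * y = (p : A) * b) →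
      (∃ a : A, ((x * z) * y - y * (x * z)) - (p : A) * u = (p : A) ^ 2 * a) →
      (∃ a : A, (x * y - y * x) - (p : A) * v = (p : A) ^ 2 * a) →
      (∃ a : A, (z * y - y * z) - (p : A) * w = (p : A) ^ 2 * a) →
      ∃ a : A, u - (x * w + z * v) = (p : A) * a) ∧
    -- (3) Jacobi identity when n > 1: {x,{y,z}} + {z,{x,y}} + {y,{z,x}} = 0
    (1 < n → ∀ x y z a b c u v w : A,
      (∀ t : A, ∃ s : A, x * t - t * x = (p : A) * s) →
      (∀ t : A, ∃ s : A, y * t - t * y = (p : A) * s) →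
      (∀ t : A, ∃ s : A, z * t - t * z = (p : A) * s) →
      (∃ s : A, (y * z - z * y) - (p : A) * a = (p : A) ^ 2 * s) →
      (∃ s : A, (z * x - x * z) - (p : A) * b = (p : A) ^ 2 * s) →
      (∃ s : A, (x * y - y * x) - (p : A) * c = (p : A) ^ 2 * s) →
      (∃ s : A, (x * a - a * x) - (p : A) * u = (p : A) ^ 2 * s) →
      (∃ s : A, (y * b - b * y) - (p : A) * v = (p : A) ^ 2 * s) →
      (∃ s : A, (z * c - c * z) - (p : A) * w = (p : A) ^ 2 * s) →
      ∃ s : A, u + v + w = (p : A) * s) := by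
  have hq : ∀ a : A, a * (p : A) = (p : A) * a := fun a => ((Nat.cast_commute p a).symm).eq
  -- cancellation of one `p` from a congruence mod `p²`
  have cancel1 : ∀ t c : A, (p : A) * t = (p : A) ^ 2 * c → ∃ b : A, t = (p : A) * b := by
    intro t c h
    obtain ⟨b, hb⟩ := hflat 1 (by omega) (t - (p : A) * c)
      (by rw [pow_one]; linear_combination (norm := noncomm_ring) h)
    have h2 : (p : A) ^ (n + 1 - 1) = (p : A) * (p : A) ^ (n - 1) := by
      rw [← pow_succ']; congr 1; omega
    rw [h2] at hb
    exact ⟨c + (p : A) ^ (n - 1) * b, by linear_combination (norm := noncomm_ring) hb⟩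
  -- cancellation of `p²` from a congruence mod `p³` (needs `n ≥ 2`)
  have cancel2 : 2 ≤ n → ∀ t c : A, (p : A) ^ 2 * t = (p : A) ^ 3 * c →
      ∃ b : A, t = (p : A) * b := by
    intro hn2 t c h
    obtain ⟨b, hb⟩ := hflat 2 (by omega) (t - (p : A) * c)
      (by linear_combination (norm := noncomm_ring) h)
    have h2 : (p : A) ^ (n + 1 - 2) = (p : A) * (p : A) ^ (n - 2) := by
      rw [← pow_succ']; congr 1; omega
    rw [h2] at hb
    exact ⟨c + (p : A) ^ (n - 2) * b, by linear_combination (norm := noncomm_ring) hb⟩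
  refine ⟨?_, ?_, ?_, ?_⟩
  · -- (1) independence of liftings
    rintro x x' y y' u u' hx hy ⟨d, hd⟩ ⟨e, he⟩ ⟨s, hs⟩ ⟨t, ht⟩
    obtain ⟨f, hf⟩ := hy d
    obtain ⟨g, hg⟩ := hx e
    have key : (p : A) * (u - u') = (p : A) ^ 2 * (g - f - d * e + e * d - s + t) := by
      linear_combination (norm := noncomm_ring)
        -hs + ht + hd * y - y * hd + x' * he - he * x' - (hq y) * d - (p : A) * hf
          + (hq x') * e + (p : A) * hg - (p : A) * (hd * e) + (p : A) * (e * hd)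
          + (p : A) * ((hq e) * d)
    exact cancel1 _ _ key
  · -- (2a) additivity
    rintro x x' y u u' v hx hx' hy ⟨s, hs⟩ ⟨t, ht⟩ ⟨r, hr⟩
    have key : (p : A) * (v - (u + u')) = (p : A) ^ 2 * (s + t - r) := by
      linear_combination (norm := noncomm_ring) -hr + hs + ht
    exact cancel1 _ _ key
  · -- (2b) Leibniz rule
    rintro x z y u v w hx hz hy ⟨s1, hu⟩ ⟨s2, hv⟩ ⟨s3, hw⟩
    obtain ⟨m, hm⟩ := hz v
    have key : (p : A) * (u - (x * w + z * v)) = (p : A) ^ 2 * (x * s3 + s2 * z - s1 - m) := by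
      linear_combination (norm := noncomm_ring)
        -hu + x * hw + hv * z + (hq x) * w + (hq x) * ((p : A) * s3)
          + (p : A) * ((hq x) * s3) - (p : A) * hm
    exact cancel1 _ _ key
  · -- (3) Jacobi identity
    rintro hn2 x y z a b c u v w hx hy hz ⟨sa, ha⟩ ⟨sb, hb⟩ ⟨sc, hc⟩ ⟨su, hu⟩ ⟨sv, hv⟩ ⟨sw, hw⟩
    obtain ⟨r1, hr1⟩ := hx sa
    obtain ⟨r2, hr2⟩ := hy sb
    obtain ⟨r3, hr3⟩ := hz sc
    have key : (p : A) ^ 2 * (u + v + w)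
        = (p : A) ^ 3 * (-(r1 + su + r2 + sv + r3 + sw)) := by
      linear_combination (norm := noncomm_ring)
        (-(p : A)) * hu - (hq x) * a - x * ha + ha * x - (hq x) * ((p : A) * sa)
          - (p : A) * ((hq x) * sa) - (p : A) * ((p : A) * hr1)
          - (p : A) * hv - (hq y) * b - y * hb + hb * y - (hq y) * ((p : A) * sb)
          - (p : A) * ((hq y) * sb) - (p : A) * ((p : A) * hr2)
          - (p : A) * hw - (hq z) * c - z * hc + hc * z - (hq z) * ((p : A) * sc)
          - (p : A) * ((hq z) * sc) - (p : A) * ((p : A) * hr3)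
    exact cancel2 (by omega) _ _ key
end

section
/- Let A_n be a flat associative algebra over R_n flat over Z/p^{n+1}Z. If x ∈ Z_i (center of A_i) and x̃ ∈ A_n is any lifting, then x̃^p mod p^{i+2} lies in Z_{i+1} and is independent of the choice of lifting. -/
/-- `x^(m+1)` commutes with `a` mod `q²`, with explicit leading term. -/
lemma aux_pow_central {A : Type*} [Ring A] (q x a b : A) (hq : ∀ y : A, q * y = y * q)
    (hx : ∀ y : A, ∃ c, x * y - y * x = q * c) (h1 : x * a = a * x + q * b) :
    ∀ m : ℕ, ∃ c : A,
      x ^ (m+1) * a = a * x ^ (m+1) + (m+1) • (q * (b * x ^ m)) + q * (q * c) := by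
  intro m
  induction m with
  | zero => exact ⟨0, by simpa using h1⟩
  | succ m ih =>
    obtain ⟨c, hc⟩ := ih
    obtain ⟨c₁, hc₁⟩ := hx b
    have e1 : x * b = b * x + q * c₁ := by rw [← hc₁]; abel
    refine ⟨(m+1) • (c₁ * x ^ m) + x * c, ?_⟩
    have t0 : x ^ (m+2) * a = x * (x ^ (m+1) * a) := by rw [pow_succ', mul_assoc]
    have t1 : x * (a * x ^ (m+1)) = a * x ^ (m+2) + q * (b * x ^ (m+1)) := by
      rw [← mul_assoc, h1, add_mul, mul_assoc, ← pow_succ', mul_assoc]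
    have t2 : x * ((m+1) • (q * (b * x ^ m)))
        = (m+1) • (q * (b * x ^ (m+1))) + q * (q * ((m+1) • (c₁ * x ^ m))) := by
      rw [mul_smul_comm, ← mul_assoc, ← hq, mul_assoc, ← mul_assoc x b, e1, add_mul,
        mul_assoc b, ← pow_succ', mul_assoc q c₁, mul_add, smul_add, ← mul_assoc q q,
        ← hq, mul_assoc, mul_smul_comm, mul_smul_comm, ← mul_assoc]
    have t3 : x * (q * (q * c)) = q * (q * (x * c)) := by
      rw [← mul_assoc, ← hq x, mul_assoc, ← mul_assoc x, ← hq x, mul_assoc]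
    calc x ^ (m+2) * a = x * (x ^ (m+1) * a) := t0
    _ = x * (a * x ^ (m+1)) + x * ((m+1) • (q * (b * x ^ m))) + x * (q * (q * c)) := by
        rw [hc, mul_add, mul_add]
    _ = a * x ^ (m+2) + (m+2) • (q * (b * x ^ (m+1)))
        + q * (q * ((m+1) • (c₁ * x ^ m) + x * c)) := by
        rw [t1, t2, t3, mul_add q, mul_add q]; simp only [add_nsmul, one_smul]; abel

/-- Powers of two liftings of the same central element agree mod `p·q, q²`. -/
lemma aux_pow_lift {A : Type*} [Ring A] (q x x' a : A) (hq : ∀ y : A, q * y = y * q)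
    (hx : ∀ y : A, ∃ c, x * y - y * x = q * c) (h' : x' = x - q * a) :
    ∀ m : ℕ, ∃ c : A,
      x' ^ (m+1) = x ^ (m+1) - (m+1) • (q * (a * x ^ m)) + q * (q * c) := by
  intro m
  induction m with
  | zero => exact ⟨0, by simp [h']⟩
  | succ m ih =>
    obtain ⟨c, hc⟩ := ih
    obtain ⟨c₂, hc₂⟩ := hx a
    have e1 : x * a = a * x + q * c₂ := by rw [← hc₂]; abel
    have t2 : x * ((m+1) • (q * (a * x ^ m)))
        = (m+1) • (q * (a * x ^ (m+1))) + q * (q * ((m+1) • (c₂ * x ^ m))) := by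
      rw [mul_smul_comm, ← mul_assoc, ← hq, mul_assoc, ← mul_assoc x a, e1, add_mul,
        mul_assoc a, ← pow_succ', mul_assoc q c₂, mul_add, smul_add, ← mul_assoc q q,
        ← hq, mul_assoc, mul_smul_comm, mul_smul_comm, ← mul_assoc]
    have t3 : x * (q * (q * c)) = q * (q * (x * c)) := by
      rw [← mul_assoc, ← hq x, mul_assoc, ← mul_assoc x, ← hq x, mul_assoc]
    have t4 : (q * a) * x ^ (m+1) = q * (a * x ^ (m+1)) := mul_assoc _ _ _
    have t5 : (q * a) * ((m+1) • (q * (a * x ^ m)))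
        = (m+1) • (q * (q * (a * (a * x ^ m)))) := by
      rw [mul_smul_comm, mul_assoc q a, ← mul_assoc a q, ← hq, mul_assoc]
    have t6 : (q * a) * (q * (q * c)) = q * (q * (a * (q * c))) := by
      rw [mul_assoc, ← mul_assoc a, ← hq, mul_assoc]
    refine ⟨x * c - (m+1) • (c₂ * x ^ m) + (m+1) • (a * (a * x ^ m)) - a * (q * c), ?_⟩
    calc x' ^ (m+2) = (x - q * a) * (x ^ (m+1) - (m+1) • (q * (a * x ^ m)) + q * (q * c)) := by
          rw [pow_succ', hc, h']
    _ = (x * x ^ (m+1) - x * ((m+1) • (q * (a * x ^ m))) + x * (q * (q * c)))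
        - ((q * a) * x ^ (m+1) - (q * a) * ((m+1) • (q * (a * x ^ m))) + (q * a) * (q * (q * c))) := by
          rw [sub_mul, mul_add, mul_sub, mul_add, mul_sub]
    _ = x ^ (m+2) - (m+2) • (q * (a * x ^ (m+1)))
        + q * (q * (x * c - (m+1) • (c₂ * x ^ m) + (m+1) • (a * (a * x ^ m)) - a * (q * c))) := by
          rw [t2, t3, t4, t5, t6, ← pow_succ']
          simp only [mul_add, mul_sub, mul_smul_comm, add_nsmul, one_smul]
          abel


/-- Lemma 1.1(5): Let `A = A_n` be flat over `ℤ/p^{n+1}ℤ`.  If `x` and `x'`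
are liftings of the same element of the center `Z_i` of `A_i = A/p^{i+1}A` (i.e. both are
central modulo `p^{i+1}` and `x ≡ x' mod p^{i+1}`), with `i + 1 ≤ n`, then
`x^p ≡ x'^p mod p^{i+2}` and `x^p mod p^{i+2}` is central in `A_{i+1}`. -/
theorem pow_p_central_well_defined (p n : ℕ) (hp : p.Prime)
    (A : Type*) [Ring A]
    (hchar : (p : A) ^ (n + 1) = 0)
    (hflat : ∀ k ≤ n + 1, ∀ a : A, (p : A) ^ k * a = 0 → ∃ b : A, a = (p : A) ^ (n + 1 - k) * b)
    (i : ℕ) (hi : i + 1 ≤ n) (x x' : A)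
    (hx : ∀ a : A, ∃ b : A, x * a - a * x = (p : A) ^ (i + 1) * b)
    (hx' : ∀ a : A, ∃ b : A, x' * a - a * x' = (p : A) ^ (i + 1) * b)
    (hxx' : ∃ a : A, x - x' = (p : A) ^ (i + 1) * a) :
    (∃ a : A, x ^ p - x' ^ p = (p : A) ^ (i + 2) * a) ∧
    (∀ a : A, ∃ b : A, x ^ p * a - a * x ^ p = (p : A) ^ (i + 2) * b) := by
  
  have hq : ∀ y : A, (p : A) ^ (i + 1) * y = y * (p : A) ^ (i + 1) :=
    fun y => ((Nat.cast_commute p y).pow_left (i + 1)).eq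
  have hp1 : p - 1 + 1 = p := Nat.succ_pred_eq_of_pos hp.pos
  have h2 : ∀ z : A, p • ((p : A) ^ (i + 1) * z) = (p : A) ^ (i + 2) * z := by
    intro z; rw [nsmul_eq_mul, ← mul_assoc, ← pow_succ']
  have h3 : ∀ w : A, (p : A) ^ (i + 1) * ((p : A) ^ (i + 1) * w)
      = (p : A) ^ (i + 2) * ((p : A) ^ i * w) := by
    intro w
    rw [← mul_assoc, ← mul_assoc, ← pow_add, ← pow_add, show i + 1 + (i + 1) = i + 2 + i by omega]
  constructor
  · obtain ⟨a₀, ha₀⟩ := hxx'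
    have h' : x' = x - (p : A) ^ (i + 1) * a₀ := by rw [← ha₀]; abel
    obtain ⟨c, hc⟩ := aux_pow_lift ((p : A) ^ (i + 1)) x x' a₀ hq hx h' (p - 1)
    rw [hp1] at hc
    refine ⟨a₀ * x ^ (p - 1) - (p : A) ^ i * c, ?_⟩
    rw [hc, h2, h3, mul_sub]
    abel
  · intro a
    obtain ⟨b, hb⟩ := hx a
    have e : x * a = a * x + (p : A) ^ (i + 1) * b := by rw [← hb]; abel
    obtain ⟨c, hc⟩ := aux_pow_central ((p : A) ^ (i + 1)) x a b hq hx e (p - 1)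
    rw [hp1] at hc
    refine ⟨b * x ^ (p - 1) + (p : A) ^ i * c, ?_⟩
    rw [hc, h2, h3, mul_add]
    abel
end

section
/- Let p = 2 and Z_0 a Poisson algebra over R_0 with Poisson structure given by an exact symplectic form ω = dη on the smooth R_0-algebra Z_0. Define z^{[2]} = L_{t_z} i_{t_z} η − i_{t_z^{[2]}} η, where t_z is the Hamiltonian vector field of z. Then for all x, y ∈ Z_0: (x+y)^{[2]} − x^{[2]} − y^{[2]} = {x,y}; {x^{[2]}, y} = {x,{x,y}}; and (xy)^{[2]} = y²x^{[2]} + x²y^{[2]} + xy{x,y}. -/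
open KaehlerDifferential

/-- The square `θ^{[2]} = θ ∘ θ` of a derivation, which is again a derivation in
characteristic `2` (the second power in the restricted Lie algebra of derivations). -/
noncomputable def derSq {R A : Type*} [CommRing R] [CommRing A] [Algebra R A]
    (h2 : (2 : A) = 0) (θ : Derivation R A A) : Derivation R A A where
  toLinearMap := θ.toLinearMap ∘ₗ θ.toLinearMap
  map_one_eq_zero' := by simp
  leibniz' := fun a b => by
    have h : (θ : A → A) ((θ : A → A) (a * b)) =
        a * (θ : A → A) ((θ : A → A) b) + b * (θ : A → A) ((θ : A → A) a) +
          2 * ((θ : A → A) a * (θ : A → A) b) := by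
      rw [Derivation.leibniz]
      simp only [smul_eq_mul, map_add, Derivation.leibniz]
      ring
    simp only [LinearMap.coe_comp, Function.comp_apply, Derivation.coeFn_coe, smul_eq_mul]
    rw [h, h2]
    ring

/-- The pairing `i_θ η` of a vector field (derivation) with a `1`-form. -/
noncomputable def pairD {R A : Type*} [CommRing R] [CommRing A] [Algebra R A]
    (θ : Derivation R A A) (η : Ω[A⁄R]) : A :=
  θ.liftKaehlerDifferential η

/-- The `2`-form `ω = dη` evaluated on a pair of vector fields, by Cartan's formula. -/
noncomputable def dEta {R A : Type*} [CommRing R] [CommRing A] [Algebra R A]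
    (η : Ω[A⁄R]) (θ₁ θ₂ : Derivation R A A) : A :=
  θ₁ (pairD θ₂ η) - θ₂ (pairD θ₁ η) - pairD ⁅θ₁, θ₂⁆ η

/-- The restricted structure `z^{[2]} = L_{t_z} i_{t_z} η − i_{t_z^{[2]}} η` associated to
the primitive `η` and a choice of Hamiltonian vector fields `t`. -/
noncomputable def restrictedSq {R A : Type*} [CommRing R] [CommRing A] [Algebra R A]
    (h2 : (2 : A) = 0) (η : Ω[A⁄R]) (t : A → Derivation R A A) (z : A) : A :=
  t z (pairD (t z) η) - pairD (derSq h2 (t z)) η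

section Aux
variable {R A : Type*} [CommRing R] [CommRing A] [Algebra R A]

lemma pairD_add (θ₁ θ₂ : Derivation R A A) (η : Ω[A⁄R]) :
    pairD (θ₁ + θ₂) η = pairD θ₁ η + pairD θ₂ η := by
  have := map_add (KaehlerDifferential.linearMapEquivDerivation R A).symm θ₁ θ₂
  unfold pairD
  rw [show (θ₁ + θ₂).liftKaehlerDifferential =
    (KaehlerDifferential.linearMapEquivDerivation R A).symm (θ₁ + θ₂) from rfl, this]
  rfl

lemma pairD_smul (c : A) (θ : Derivation R A A) (η : Ω[A⁄R]) :
    pairD (c • θ) η = c * pairD θ η := by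
  have := map_smul (KaehlerDifferential.linearMapEquivDerivation R A).symm c θ
  unfold pairD
  rw [show (c • θ).liftKaehlerDifferential =
    (KaehlerDifferential.linearMapEquivDerivation R A).symm (c • θ) from rfl, this]
  rfl

lemma pairD_sub (θ₁ θ₂ : Derivation R A A) (η : Ω[A⁄R]) :
    pairD (θ₁ - θ₂) η = pairD θ₁ η - pairD θ₂ η := by
  have := map_sub (KaehlerDifferential.linearMapEquivDerivation R A).symm θ₁ θ₂
  unfold pairD
  rw [show (θ₁ - θ₂).liftKaehlerDifferential =
    (KaehlerDifferential.linearMapEquivDerivation R A).symm (θ₁ - θ₂) from rfl, this]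
  rfl

lemma pairD_neg (θ : Derivation R A A) (η : Ω[A⁄R]) :
    pairD (-θ) η = - pairD θ η := by
  have := map_neg (KaehlerDifferential.linearMapEquivDerivation R A).symm θ
  unfold pairD
  rw [show (-θ).liftKaehlerDifferential =
    (KaehlerDifferential.linearMapEquivDerivation R A).symm (-θ) from rfl, this]
  rfl

lemma pairD_zero (η : Ω[A⁄R]) : pairD (0 : Derivation R A A) η = 0 := by
  simpa using pairD_sub (R := R) (A := A) 0 0 η

lemma derSq_apply (h2 : (2 : A) = 0) (θ : Derivation R A A) (f : A) :
    derSq h2 θ f = θ (θ f) := rfl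

lemma derSq_add (h2 : (2 : A) = 0) (a b : Derivation R A A) :
    derSq h2 (a + b) = derSq h2 a + derSq h2 b + ⁅a, b⁆ := by
  ext f
  simp only [derSq_apply, Derivation.add_apply, Derivation.commutator_apply, map_add]
  linear_combination (b (a f)) * h2

lemma derSq_smul (h2 : (2 : A) = 0) (c : A) (θ : Derivation R A A) :
    derSq h2 (c • θ) = (c * c) • derSq h2 θ + (c * θ c) • θ := by
  ext f
  simp only [derSq_apply, Derivation.add_apply, Derivation.smul_apply, smul_eq_mul,
    Derivation.leibniz]
  ring

lemma bracket_smul_left (c : A) (a θ : Derivation R A A) :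
    ⁅c • a, θ⁆ = c • ⁅a, θ⁆ - (θ c) • a := by
  ext f
  simp only [Derivation.commutator_apply, Derivation.sub_apply, Derivation.smul_apply,
    smul_eq_mul, Derivation.leibniz, map_smul]
  ring

lemma bracket_sq (h2 : (2 : A) = 0) (a θ : Derivation R A A) :
    ⁅a, ⁅a, θ⁆⁆ = ⁅derSq h2 a, θ⁆ := by
  ext f
  simp only [Derivation.commutator_apply, derSq_apply, map_sub]
  linear_combination (θ (a (a f)) - a (θ (a f))) * h2

lemma dEta_add_left (η : Ω[A⁄R]) (u v θ : Derivation R A A) :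
    dEta η (u + v) θ = dEta η u θ + dEta η v θ := by
  unfold dEta
  rw [add_lie, pairD_add, pairD_add, Derivation.add_apply, map_add]
  ring

lemma dEta_sub_left (η : Ω[A⁄R]) (u v θ : Derivation R A A) :
    dEta η (u - v) θ = dEta η u θ - dEta η v θ := by
  unfold dEta
  rw [sub_lie, pairD_sub, pairD_sub, Derivation.sub_apply, map_sub]
  ring

lemma dEta_smul_left (η : Ω[A⁄R]) (c : A) (u θ : Derivation R A A) :
    dEta η (c • u) θ = c * dEta η u θ := by
  unfold dEta
  rw [bracket_smul_left, pairD_sub, pairD_smul, pairD_smul, pairD_smul,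
    Derivation.smul_apply, smul_eq_mul, Derivation.leibniz]
  simp only [smul_eq_mul]
  ring

end Aux

/-- Let `p = 2` and `Z_0` a Poisson algebra over `R_0` whose Poisson structure
is given by an exact symplectic form `ω = dη` on the smooth `R_0`-algebra `Z_0`; `t_z` is the
Hamiltonian vector field of `z` (`dz = i_{t_z}ω`, `ω` non-degenerate) and
`{x,y} = i_{t_x} i_{t_y} ω = t_x y`.  Define `z^{[2]} = L_{t_z} i_{t_z} η − i_{t_z^{[2]}} η`.
Then for all `x, y ∈ Z_0`:
`(x+y)^{[2]} − x^{[2]} − y^{[2]} = {x,y}`, `{x^{[2]}, y} = {x,{x,y}}`, and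
`(xy)^{[2]} = y²x^{[2]} + x²y^{[2]} + xy{x,y}`. -/
theorem restricted_structure_identities (R A : Type) [CommRing R] [CommRing A] [Algebra R A]
    (h2R : (2 : R) = 0) (h2 : (2 : A) = 0)
    (hsmooth : Algebra.Smooth R A) (η : Ω[A⁄R])
    (t : A → Derivation R A A)
    (hham : ∀ (z : A) (θ : Derivation R A A), dEta η (t z) θ = θ z)
    (hnd : ∀ θ : Derivation R A A, (∀ θ' : Derivation R A A, dEta η θ θ' = 0) → θ = 0) :
    ∀ x y : A,
      (restrictedSq h2 η t (x + y) - restrictedSq h2 η t x - restrictedSq h2 η t y =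
        t x y) ∧
      (t (restrictedSq h2 η t x) y = t x (t x y)) ∧
      (restrictedSq h2 η t (x * y) =
        y ^ 2 * restrictedSq h2 η t x + x ^ 2 * restrictedSq h2 η t y + x * y * t x y) := by
  -- t z z = 0
  have ht_self : ∀ z : A, t z z = 0 := by
    intro z
    have h := hham z (t z)
    unfold dEta at h
    rw [lie_self, pairD_zero] at h
    rw [← h]; ring
  -- symmetry of the bracket in char 2
  have ht_comm : ∀ x y : A, t x y = t y x := by
    intro x y
    have h1 := hham x (t y)
    have h2' := hham y (t x)
    unfold dEta at h1 h2'
    have hsk : pairD ⁅t y, t x⁆ η = - pairD ⁅t x, t y⁆ η := by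
      rw [← lie_skew]; exact pairD_neg _ _
    linear_combination h2' - h1 + hsk +
      (t x y + t x (pairD (t y) η) - t y (pairD (t x) η) - pairD ⁅t x, t y⁆ η - t y x) * h2
  -- additivity of t
  have ht_add : ∀ x y : A, t (x + y) = t x + t y := by
    intro x y
    have key : ∀ θ : Derivation R A A, dEta η (t (x + y) - (t x + t y)) θ = 0 := by
      intro θ
      rw [dEta_sub_left, dEta_add_left, hham, hham, hham, map_add]
      ring
    have := hnd _ key
    rwa [sub_eq_zero] at this
  -- Leibniz rule for t
  have ht_mul : ∀ x y : A, t (x * y) = x • t y + y • t x := by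
    intro x y
    have key : ∀ θ : Derivation R A A, dEta η (t (x * y) - (x • t y + y • t x)) θ = 0 := by
      intro θ
      rw [dEta_sub_left, dEta_add_left, dEta_smul_left, dEta_smul_left, hham, hham, hham,
        Derivation.leibniz]
      simp only [smul_eq_mul]
      ring
    have := hnd _ key
    rwa [sub_eq_zero] at this
  intro x y
  refine ⟨?_, ?_, ?_⟩
  · -- identity 1
    have e := hham x (t y)
    unfold dEta at e
    rw [ht_comm y x] at e
    unfold restrictedSq
    rw [ht_add, pairD_add, derSq_add, pairD_add, pairD_add, Derivation.add_apply,
      map_add, map_add]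
    linear_combination e + (t y (pairD (t x) η)) * h2
  · -- identity 2
    have key : t (restrictedSq h2 η t x) = derSq h2 (t x) := by
      have main : ∀ θ : Derivation R A A,
          dEta η (derSq h2 (t x)) θ = θ (restrictedSq h2 η t x) := by
        intro θ
        have h1 := hham x θ
        have h2' := hham x ⁅t x, θ⁆
        unfold dEta at h1 h2'
        have ha1 := congrArg (t x) h1
        rw [map_sub, map_sub] at ha1
        rw [bracket_sq h2] at h2'
        have hax : t x x = 0 := ht_self x
        have hbrx : ⁅t x, θ⁆ x = t x (θ x) := by
          rw [Derivation.commutator_apply, hax, map_zero, sub_zero]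
        rw [hbrx, Derivation.commutator_apply] at h2'
        unfold dEta restrictedSq
        rw [map_sub, derSq_apply]
        linear_combination ha1 + h2' +
          (t x (θ (pairD (t x) η)) - θ (t x (pairD (t x) η)) + t x (θ x)) * h2
      have key2 : ∀ θ : Derivation R A A,
          dEta η (t (restrictedSq h2 η t x) - derSq h2 (t x)) θ = 0 := by
        intro θ
        rw [dEta_sub_left, hham, main]
        ring
      have := hnd _ key2
      rwa [sub_eq_zero] at this
    rw [key, derSq_apply]
  · -- identity 3
    have hax : t x x = 0 := ht_self x
    have hby : t y y = 0 := ht_self y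
    have hbx : t y x = t x y := (ht_comm y x)
    have e := hham x (t y)
    unfold dEta at e
    unfold restrictedSq
    rw [ht_mul x y]
    have hPm : pairD (x • t y + y • t x) η = x * pairD (t y) η + y * pairD (t x) η := by
      rw [pairD_add, pairD_smul, pairD_smul]
    have hbr : pairD ⁅x • t y, y • t x⁆ η = - (x * y) * pairD ⁅t x, t y⁆ η := by
      rw [bracket_smul_left]
      have hb1 : ⁅t y, y • t x⁆ = - (y • ⁅t x, t y⁆) := by
        rw [← lie_skew, bracket_smul_left, hby, zero_smul, sub_zero, ← lie_skew]
      have hb2 : (y • t x) x = 0 := by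
        rw [Derivation.smul_apply, hax, smul_zero]
      rw [hb1, hb2, zero_smul, sub_zero, pairD_smul, pairD_neg, pairD_smul]
      ring
    have hPD : pairD (derSq h2 (x • t y + y • t x)) η
        = x * x * pairD (derSq h2 (t y)) η + x * t y x * pairD (t y) η
          + y * y * pairD (derSq h2 (t x)) η + y * t x y * pairD (t x) η
          - x * y * pairD ⁅t x, t y⁆ η := by
      rw [derSq_add, derSq_smul, derSq_smul, pairD_add, pairD_add, pairD_add, pairD_add,
        pairD_smul, pairD_smul, pairD_smul, pairD_smul, hbr]
      ring
    rw [hPm, hPD]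
    simp only [Derivation.add_apply, Derivation.smul_apply, smul_eq_mul, map_add,
      Derivation.leibniz, smul_eq_mul]
    rw [hax, hby, hbx]
    linear_combination x * y * e + x * y * hbx +
      (x * y * (t y (pairD (t x) η)) + x * y * pairD ⁅t x, t y⁆ η) * h2
end

section
/- Let p = 2 and A_n flat over R_n flat over Z/2^{n+1}Z, with the center Z_1 generated appropriately (e.g., Φ_1 surjective). If x ∈ Z_1 and y ∈ Z_i with 1 ≤ i ≤ m, and x̃, ỹ ∈ A_n are any liftings with x̃ = w̃² + 2ṽ for w̃, ṽ central modulo 2, then [x̃, ỹ] ≡ 0 mod 2^{i+2}. -/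
/-- Let `p = 2` and `A = A_n` flat over `ℤ/2^{n+1}ℤ` (so `2^{n+1} = 0` in `A`
and multiplication by `2^k` has kernel `2^{n+1-k}A`).  If `x̃ = w̃² + 2ṽ` with `w̃, ṽ`
central modulo `2` (as follows from the surjectivity of `Φ_1` onto `Z_1`), and `ỹ` lifts an
element of the center `Z_i` (i.e. `ỹ` is central modulo `2^{i+1}`) with `1 ≤ i ≤ n`, then
`[x̃, ỹ] ≡ 0 mod 2^{i+2}`. -/
theorem char_two_comm_vanishing (n : ℕ)
    (A : Type*) [Ring A]
    (hchar : (2 : A) ^ (n + 1) = 0)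
    (hflat : ∀ k ≤ n + 1, ∀ a : A, (2 : A) ^ k * a = 0 → ∃ b : A, a = (2 : A) ^ (n + 1 - k) * b)
    (i : ℕ) (hi : 1 ≤ i) (hin : i ≤ n)
    (x y w v : A)
    (hw : ∀ a : A, ∃ b : A, w * a - a * w = (2 : A) * b)
    (hv : ∀ a : A, ∃ b : A, v * a - a * v = (2 : A) * b)
    (hx : x = w ^ 2 + 2 * v)
    (hy : ∀ a : A, ∃ b : A, y * a - a * y = (2 : A) ^ (i + 1) * b) :
    ∃ b : A, x * y - y * x = (2 : A) ^ (i + 2) * b := by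
  subst hx
  obtain ⟨c, hc⟩ := hy w
  obtain ⟨e, he⟩ := hy v
  obtain ⟨d, hd⟩ := hw c
  have hd' : w * c = c * w + 2 * d := by rw [← hd]; noncomm_ring
  have h2 : ∀ a : A, (2 : A) ^ (i + 1) * a = a * (2 : A) ^ (i + 1) := fun a =>
    ((Commute.ofNat_left 2 a).pow_left (i + 1))
  refine ⟨-(c * w + d + e), ?_⟩
  calc (w ^ 2 + 2 * v) * y - y * (w ^ 2 + 2 * v)
      = -(w * (y * w - w * y) + (y * w - w * y) * w) - 2 * (y * v - v * y) := by
        noncomm_ring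
    _ = -(w * ((2 : A) ^ (i + 1) * c) + ((2 : A) ^ (i + 1) * c) * w)
          - 2 * ((2 : A) ^ (i + 1) * e) := by rw [hc, he]
    _ = (2 : A) ^ (i + 1) * (-(w * c + c * w) - 2 * e) := by
        rw [show w * ((2 : A) ^ (i + 1) * c) = (2 : A) ^ (i + 1) * (w * c) by
          rw [← mul_assoc, ← h2 w, mul_assoc],
          show (2 : A) * ((2 : A) ^ (i + 1) * e) = (2 : A) ^ (i + 1) * (2 * e) by
          rw [← mul_assoc, ← h2 2, mul_assoc]]
        noncomm_ring
    _ = (2 : A) ^ (i + 1) * (-(2 * (c * w) + 2 * d) - 2 * e) := by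
        rw [hd']; noncomm_ring
    _ = (2 : A) ^ (i + 2) * -(c * w + d + e) := by
        rw [pow_succ]; noncomm_ring
end
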